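/- arXiv:2204.02535 — 6 statements merged into one kernel-verified Lean document; each statement's English description precedes it below -/
import Mathlib

section
/- The number of weakly decreasing finite sequences of positive integers λ₁ ≥ λ₂ ≥ λ₃ ≥ ⋯ whose odd-indexed parts sum to n equals the number of pairs (α, β) of partitions with |α| + |β| = n. -/
/-- `l` is a partition: a weakly decreasing list of positive integers. -/
def IsPartition (l : List ℕ) : Prop :=
  l.Pairwise (· ≥ ·) ∧ ∀ x ∈ l, 0 < x

/-- `l` is a strict partition: a strictly decreasing list of positive integers. -/
def IsStrict (l : List ℕ) : Prop :=
  l.Pairwise (· > ·) ∧ ∀ x ∈ l, 0 < x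

/-- Sum of the parts of `l` in positions `1, k+1, 2k+1, …` (0-indexed `0, k, 2k, …`). -/
def schmidtSum (k : ℕ) (l : List ℕ) : ℕ :=
  ∑ i ∈ Finset.range l.length, if i % k = 0 then l.getD i 0 else 0

namespace SchmidtTwoAux

open List

/-- Remove the first column of a Young diagram given by row lengths. -/
def strip (l : List ℕ) : List ℕ := (l.map (· - 1)).filter (fun x => 0 < x)

lemma strip_sum_add_length (l : List ℕ) :
    (strip l).sum + (strip l).length ≤ l.sum := by
  induction l with
  | nil => simp [strip]
  | cons a t ih =>
    simp only [strip, map_cons, filter_cons] at ih ⊢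
    by_cases h : 0 < a - 1
    · rw [if_pos (by simpa using h)]
      simp only [sum_cons, length_cons]
      omega
    · rw [if_neg (by simpa using h)]
      simp only [sum_cons]
      omega

lemma strip_pos : ∀ x ∈ strip l, 0 < x := by
  intro x hx
  have := of_mem_filter hx
  simpa using this

lemma strip_length_le (l : List ℕ) : (strip l).length ≤ l.length :=
  (List.length_filter_le _ _).trans (by simp)

/-- The conjugate partition, as a list of column heights in weakly decreasing order. -/
def conj (l : List ℕ) : List ℕ :=
  if h : l = [] then [] else l.length :: conj (strip l)
termination_by l.sum + l.length
decreasing_by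
  have h1 := strip_sum_add_length l
  have h2 : 0 < l.length := List.length_pos_iff.mpr h
  omega

lemma conj_nil : conj [] = [] := by simp [conj]

lemma conj_ne_nil {l : List ℕ} (h : l ≠ []) :
    conj l = l.length :: conj (strip l) := by
  rw [conj]; simp [h]

lemma mem_conj_le (l : List ℕ) : ∀ y ∈ conj l, y ≤ l.length := by
  induction l using conj.induct with
  | case1 => simp [conj_nil]
  | case2 l h ih =>
    rw [conj_ne_nil h]
    intro y hy
    rcases List.mem_cons.mp hy with rfl | hy
    · exact le_rfl
    · exact (ih y hy).trans (strip_length_le l)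

lemma conj_pos (l : List ℕ) : ∀ x ∈ conj l, 0 < x := by
  induction l using conj.induct with
  | case1 => simp [conj_nil]
  | case2 l h ih =>
    rw [conj_ne_nil h]
    intro x hx
    rcases List.mem_cons.mp hx with rfl | hx
    · exact List.length_pos_iff.mpr h
    · exact ih x hx

lemma conj_sorted (l : List ℕ) : (conj l).Pairwise (· ≥ ·) := by
  induction l using conj.induct with
  | case1 => simp [conj_nil]
  | case2 l h ih =>
    rw [conj_ne_nil h, List.pairwise_cons]
    refine ⟨fun b hb => ?_, ih⟩
    exact (mem_conj_le _ b hb).trans (strip_length_le l)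

lemma countP_strip (l : List ℕ) (i : ℕ) :
    (strip l).countP (fun x => i < x) = l.countP (fun x => i + 1 < x) := by
  rw [strip, List.countP_filter, List.countP_map]
  apply List.countP_congr
  intro x _
  simp only [Function.comp, Bool.and_eq_true, decide_eq_true_eq, eq_iff_iff]
  omega

lemma conj_getD (l : List ℕ) (hp : ∀ x ∈ l, 0 < x) (i : ℕ) :
    (conj l).getD i 0 = l.countP (fun x => i < x) := by
  induction l using conj.induct generalizing i with
  | case1 => simp [conj_nil]
  | case2 l h ih =>
    rw [conj_ne_nil h]
    cases i with
    | zero =>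
      simp only [List.getD_cons_zero]
      symm
      rw [List.countP_eq_length]
      intro a ha
      simpa using hp a ha
    | succ i =>
      simp only [List.getD_cons_succ]
      rw [ih strip_pos i, countP_strip]

lemma getD_lt_iff {A : List ℕ} (hA : A.Pairwise (· ≥ ·)) (i j : ℕ) :
    j < A.getD i 0 ↔ i < A.countP (fun x => j < x) := by
  induction A generalizing i with
  | nil => simp
  | cons a T ih =>
    rw [List.pairwise_cons] at hA
    obtain ⟨h1, h2⟩ := hA
    cases i with
    | zero =>
      simp only [List.getD_cons_zero, List.countP_cons]
      constructor
      · intro hja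
        rw [decide_eq_true hja, if_pos rfl]
        omega
      · intro hc
        by_contra hja
        rw [decide_eq_false hja, if_neg Bool.false_ne_true, Nat.add_zero] at hc
        rcases List.countP_pos_iff.mp hc with ⟨b, hb, hjb⟩
        have := h1 b hb
        simp only [decide_eq_true_eq] at hjb
        omega
    | succ i =>
      simp only [List.getD_cons_succ, List.countP_cons]
      by_cases hja : j < a
      · rw [ih h2 i, decide_eq_true hja, if_pos rfl]
        omega
      · have hT0 : T.countP (fun x => j < x) = 0 := by
          rw [List.countP_eq_zero]
          intro b hb
          have := h1 b hb
          simp only [decide_eq_true_eq]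
          omega
        have hgd : T.getD i 0 ≤ j := by
          by_cases hi : i < T.length
          · rw [List.getD_eq_getElem _ _ hi]
            have := h1 _ (List.getElem_mem hi)
            omega
          · rw [List.getD_eq_default _ _ (by omega)]
            omega
        rw [decide_eq_false hja, if_neg Bool.false_ne_true, hT0]
        omega

lemma eq_of_getD {A B : List ℕ} (hA : A.Pairwise (· ≥ ·)) (hpA : ∀ x ∈ A, 0 < x)
    (hB : B.Pairwise (· ≥ ·)) (hpB : ∀ x ∈ B, 0 < x)
    (h : ∀ i, A.getD i 0 = B.getD i 0) : A = B := by
  have hlen : ∀ (C : List ℕ), (∀ x ∈ C, 0 < x) → ∀ i, (i < C.length ↔ 0 < C.getD i 0) := by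
    intro C hpC i
    constructor
    · intro hi
      rw [List.getD_eq_getElem _ _ hi]
      exact hpC _ (List.getElem_mem hi)
    · intro hpos
      by_contra hi
      rw [List.getD_eq_default _ _ (by omega)] at hpos
      omega
  have hl : A.length = B.length := by
    by_contra hne
    rcases Nat.lt_or_ge A.length B.length with hlt | hge
    · have h1 := (hlen B hpB A.length).mp hlt
      rw [← h] at h1
      rw [List.getD_eq_default _ _ le_rfl] at h1
      omega
    · have : B.length < A.length := by omega
      have h1 := (hlen A hpA B.length).mp this
      rw [h] at h1
      rw [List.getD_eq_default _ _ le_rfl] at h1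
      omega
  apply List.ext_getElem hl
  intro i hi1 hi2
  have := h i
  rwa [List.getD_eq_getElem _ _ hi1, List.getD_eq_getElem _ _ hi2] at this

lemma countP_conj {l : List ℕ} (hs : l.Pairwise (· ≥ ·)) (hp : ∀ x ∈ l, 0 < x) (i : ℕ) :
    (conj l).countP (fun x => i < x) = l.getD i 0 := by
  have hkey : ∀ j, (j < (conj l).countP (fun x => i < x)) ↔ (j < l.getD i 0) := by
    intro j
    rw [← getD_lt_iff (conj_sorted l) j i, conj_getD l hp j, ← getD_lt_iff hs i j]
  have h1 := hkey ((conj l).countP (fun x => i < x))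
  have h2 := hkey (l.getD i 0)
  omega

lemma conj_conj {l : List ℕ} (hs : l.Pairwise (· ≥ ·)) (hp : ∀ x ∈ l, 0 < x) :
    conj (conj l) = l := by
  apply eq_of_getD (conj_sorted _) (conj_pos _) hs hp
  intro i
  rw [conj_getD _ (conj_pos l) i, countP_conj hs hp]

lemma even_count (N : ℕ) :
    (∑ i ∈ Finset.range N, if i % 2 = 0 then 1 else 0) = (N + 1) / 2 := by
  induction N with
  | zero => simp
  | succ N ih =>
    rw [Finset.sum_range_succ, ih]
    by_cases h : N % 2 = 0
    · rw [if_pos h]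
      omega
    · rw [if_neg h]
      omega

lemma filter_pos_sorted {A : List ℕ} (h : A.Pairwise (· ≥ ·)) :
    A.filter (fun x => 0 < x) = A.take (A.countP (fun x => 0 < x)) := by
  induction A with
  | nil => rfl
  | cons a T ih =>
    rw [List.pairwise_cons] at h
    obtain ⟨h1, h2⟩ := h
    rw [List.filter_cons, List.countP_cons]
    by_cases ha : 0 < a
    · rw [decide_eq_true ha, if_pos rfl, if_pos rfl, ih h2, List.take_cons (by omega)]
      simp
    · have ha0 : a = 0 := by omega
      have hall : ∀ b ∈ T, b = 0 := by
        intro b hb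
        have := h1 b hb
        omega
      have hfT : T.filter (fun x => decide (0 < x)) = [] := by
        rw [List.filter_eq_nil_iff]
        intro b hb
        simp [hall b hb]
      have hc : T.countP (fun x => 0 < x) = 0 := by
        rw [List.countP_eq_zero]
        intro b hb
        simp [hall b hb]
      simp [decide_eq_false ha, hc, hfT]

lemma strip_sorted {l : List ℕ} (hs : l.Pairwise (· ≥ ·)) : (strip l).Pairwise (· ≥ ·) := by
  apply List.Pairwise.filter
  exact List.Pairwise.map _ (fun a b hab => by omega) hs

lemma schmidt_step {l : List ℕ} (hs : l.Pairwise (· ≥ ·)) (hp : ∀ x ∈ l, 0 < x) :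
    schmidtSum 2 l = (l.length + 1) / 2 + schmidtSum 2 (strip l) := by
  classical
  obtain ⟨m, hm⟩ : ∃ m, l.countP (fun x => 1 < x) = m := ⟨_, rfl⟩
  have hml : m ≤ l.length := hm ▸ List.countP_le_length
  -- strip l = take m (map pred l)
  have hmap_sorted : (l.map (· - 1)).Pairwise (· ≥ ·) :=
    List.Pairwise.map _ (fun a b hab => by omega) hs
  have hcount : (l.map (· - 1)).countP (fun x => 0 < x) = m := by
    rw [List.countP_map, ← hm]
    apply List.countP_congr
    intro x _
    simp only [Function.comp, decide_eq_true_eq, eq_iff_iff]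
    omega
  have hstrip : strip l = (l.map (· - 1)).take m := by
    rw [strip, filter_pos_sorted hmap_sorted, hcount]
  have hstrip_len : (strip l).length = m := by
    rw [hstrip, List.length_take, List.length_map]
    omega
  -- getD facts
  have hstrip_get : ∀ i (hi : i < m), (strip l).getD i 0 + 1 = l.getD i 0 := by
    intro i hi
    have hi2 : i < (strip l).length := by omega
    rw [List.getD_eq_getElem _ _ hi2, List.getD_eq_getElem _ _ (by omega : i < l.length)]
    have : (strip l)[i] = (l.map (· - 1))[i]'(by rw [List.length_map]; omega) := by
      simp only [hstrip]
      exact List.getElem_take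
    rw [this]
    simp only [List.getElem_map]
    have hpos := hp _ (List.getElem_mem (by omega : i < l.length))
    omega
  have htail_one : ∀ i, m ≤ i → i < l.length → l.getD i 0 = 1 := by
    intro i him hil
    have h1 : ¬ (1 < l.getD i 0) := by
      rw [getD_lt_iff hs i 1, hm]
      omega
    have h2 : 0 < l.getD i 0 := by
      rw [List.getD_eq_getElem _ _ hil]
      exact hp _ (List.getElem_mem hil)
    omega
  -- split sum
  rw [schmidtSum, schmidtSum, hstrip_len]
  have hsplit : (∑ i ∈ Finset.range l.length, if i % 2 = 0 then l.getD i 0 else 0)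
      = (∑ i ∈ Finset.range m, if i % 2 = 0 then l.getD i 0 else 0)
        + (∑ i ∈ Finset.Ico m l.length, if i % 2 = 0 then l.getD i 0 else 0) := by
    rw [Finset.range_eq_Ico, ← Finset.sum_Ico_consecutive _ (Nat.zero_le m) hml,
      ← Finset.range_eq_Ico]
  have hA : (∑ i ∈ Finset.range m, if i % 2 = 0 then l.getD i 0 else 0)
      = (∑ i ∈ Finset.range m, if i % 2 = 0 then (strip l).getD i 0 else 0)
        + (∑ i ∈ Finset.range m, if i % 2 = 0 then 1 else 0) := by
    rw [← Finset.sum_add_distrib]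
    apply Finset.sum_congr rfl
    intro i hi
    rw [Finset.mem_range] at hi
    have := hstrip_get i hi
    by_cases hpar : i % 2 = 0
    · rw [if_pos hpar, if_pos hpar, if_pos hpar]
      omega
    · rw [if_neg hpar, if_neg hpar, if_neg hpar]
  have hB : (∑ i ∈ Finset.Ico m l.length, if i % 2 = 0 then l.getD i 0 else 0)
      = (∑ i ∈ Finset.Ico m l.length, if i % 2 = 0 then 1 else 0) := by
    apply Finset.sum_congr rfl
    intro i hi
    rw [Finset.mem_Ico] at hi
    rw [htail_one i hi.1 hi.2]
  have hE : (∑ i ∈ Finset.range m, if i % 2 = 0 then 1 else 0)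
      + (∑ i ∈ Finset.Ico m l.length, if i % 2 = 0 then 1 else 0) = (l.length + 1) / 2 := by
    rw [Finset.range_eq_Ico, Finset.sum_Ico_consecutive _ (Nat.zero_le m) hml,
      ← Finset.range_eq_Ico, even_count]
  omega

lemma schmidt_conj {l : List ℕ} (hs : l.Pairwise (· ≥ ·)) (hp : ∀ x ∈ l, 0 < x) :
    schmidtSum 2 l = ((conj l).map (fun c => (c + 1) / 2)).sum := by
  induction l using conj.induct with
  | case1 => simp [conj_nil, schmidtSum]
  | case2 l h ih =>
    rw [conj_ne_nil h, List.map_cons, List.sum_cons,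
      schmidt_step hs hp, ih (strip_sorted hs) strip_pos]

/-- Split a list of column heights by parity into two partitions. -/
def toPair (C : List ℕ) : List ℕ × List ℕ :=
  ((C.filter (fun c => c % 2 = 0)).map (fun c => c / 2),
   (C.filter (fun c => c % 2 = 1)).map (fun c => (c + 1) / 2))

/-- Merge two partitions into a single list of column heights. -/
def merge2 (α β : List ℕ) : List ℕ :=
  (α.map (fun a => 2 * a) ++ β.map (fun b => 2 * b - 1)).mergeSort (fun a b => decide (b ≤ a))

lemma sorted_map {f : ℕ → ℕ} (hf : ∀ a b : ℕ, a ≥ b → f a ≥ f b) {l : List ℕ}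
    (h : l.Pairwise (· ≥ ·)) : (l.map f).Pairwise (· ≥ ·) :=
  List.Pairwise.map f (fun a b hab => hf a b hab) h

lemma merge2_sorted (α β : List ℕ) : (merge2 α β).Pairwise (· ≥ ·) := by
  have h := List.pairwise_mergeSort (le := fun a b => decide (b ≤ a))
    (fun a b c h1 h2 => by simp only [decide_eq_true_eq] at *; omega)
    (fun a b => by simp only [Bool.or_eq_true, decide_eq_true_eq]; omega)
    (α.map (fun a => 2 * a) ++ β.map (fun b => 2 * b - 1))
  exact h.imp (fun hab => by simpa using hab)

lemma merge2_perm (α β : List ℕ) :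
    (merge2 α β).Perm (α.map (fun a => 2 * a) ++ β.map (fun b => 2 * b - 1)) :=
  List.mergeSort_perm _ _

lemma merge2_pos {α β : List ℕ} (hα : ∀ a ∈ α, 0 < a) (hβ : ∀ b ∈ β, 0 < b) :
    ∀ x ∈ merge2 α β, 0 < x := by
  intro x hx
  have hx' := (merge2_perm α β).mem_iff.mp hx
  rcases List.mem_append.mp hx' with h | h
  · rcases List.mem_map.mp h with ⟨a, ha, rfl⟩
    have := hα a ha
    omega
  · rcases List.mem_map.mp h with ⟨b, hb, rfl⟩
    have := hβ b hb
    omega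

lemma filter_odd_eq (C : List ℕ) :
    C.filter (fun c => c % 2 = 1) = C.filter (fun c => !(decide (c % 2 = 0))) := by
  apply List.filter_congr
  intro c _
  rcases Nat.mod_two_eq_zero_or_one c with h | h <;> simp [h]

lemma split_perm (C : List ℕ) :
    (C.filter (fun c => c % 2 = 0) ++ C.filter (fun c => c % 2 = 1)).Perm C := by
  rw [filter_odd_eq]
  exact List.filter_append_perm _ C

lemma sum_toPair (C : List ℕ) :
    (toPair C).1.sum + (toPair C).2.sum = (C.map (fun c => (c + 1) / 2)).sum := by
  have hperm := ((split_perm C).map (fun c => (c + 1) / 2)).sum_eq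
  rw [List.map_append, List.sum_append] at hperm
  rw [← hperm]
  congr 1
  show ((C.filter (fun c => c % 2 = 0)).map (fun c => c / 2)).sum = _
  congr 1
  apply List.map_congr_left
  intro c hc
  have h := List.of_mem_filter hc
  simp only [decide_eq_true_eq] at h
  omega

lemma toPair_partition {C : List ℕ} (hs : C.Pairwise (· ≥ ·)) (hp : ∀ x ∈ C, 0 < x) :
    IsPartition (toPair C).1 ∧ IsPartition (toPair C).2 := by
  refine ⟨⟨sorted_map (fun a b h => by omega) (hs.filter _), ?_⟩,
    ⟨sorted_map (fun a b h => by omega) (hs.filter _), ?_⟩⟩ <;>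
  · intro x hx
    rcases List.mem_map.mp hx with ⟨c, hc, rfl⟩
    have h1 := List.of_mem_filter hc
    have h2 := hp c (List.mem_of_mem_filter hc)
    simp only [decide_eq_true_eq] at h1
    omega

lemma sum_g_merge2 {α β : List ℕ} (hβp : ∀ b ∈ β, 0 < b) :
    ((merge2 α β).map (fun c => (c + 1) / 2)).sum = α.sum + β.sum := by
  have hperm := ((merge2_perm α β).map (fun c => (c + 1) / 2)).sum_eq
  rw [List.map_append, List.map_map, List.map_map] at hperm
  rw [hperm, List.sum_append]
  congr 1
  · have h : α.map ((fun c => (c + 1) / 2) ∘ fun a => 2 * a) = α := by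
      rw [List.map_congr_left (g := id) (fun a _ => by simp [Function.comp]; omega),
        List.map_id]
    rw [h]
  · have h : β.map ((fun c => (c + 1) / 2) ∘ fun b => 2 * b - 1) = β := by
      rw [List.map_congr_left (g := id) (fun b hb => by
        have := hβp b hb
        simp only [Function.comp_apply, id_eq]
        omega), List.map_id]
    rw [h]

lemma merge2_toPair {C : List ℕ} (hs : C.Pairwise (· ≥ ·)) (hp : ∀ x ∈ C, 0 < x) :
    merge2 (toPair C).1 (toPair C).2 = C := by
  apply List.Perm.eq_of_pairwise' (merge2_sorted _ _) hs ?_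
  refine (merge2_perm _ _).trans ?_
  have h1 : (toPair C).1.map (fun a => 2 * a) = C.filter (fun c => c % 2 = 0) := by
    show ((C.filter (fun c => c % 2 = 0)).map (fun c => c / 2)).map (fun a => 2 * a) = _
    rw [List.map_map,
      List.map_congr_left (g := id) (fun c hc => by
        have h := List.of_mem_filter hc
        simp only [decide_eq_true_eq] at h
        simp only [Function.comp_apply, id_eq]
        omega),
      List.map_id]
  have h2 : (toPair C).2.map (fun b => 2 * b - 1) = C.filter (fun c => c % 2 = 1) := by
    show ((C.filter (fun c => c % 2 = 1)).map (fun c => (c + 1) / 2)).map (fun b => 2 * b - 1) = _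
    rw [List.map_map,
      List.map_congr_left (g := id) (fun c hc => by
        have h := List.of_mem_filter hc
        simp only [decide_eq_true_eq] at h
        simp only [Function.comp_apply, id_eq]
        omega),
      List.map_id]
  rw [h1, h2]
  exact split_perm C

lemma toPair_merge2 {α β : List ℕ} (hα : IsPartition α) (hβ : IsPartition β) :
    toPair (merge2 α β) = (α, β) := by
  have hperm := merge2_perm α β
  have hE : (merge2 α β).filter (fun c => c % 2 = 0) = α.map (fun a => 2 * a) := by
    apply List.Perm.eq_of_pairwise' ((merge2_sorted α β).filter _)
      (sorted_map (fun a b h => by omega) hα.1) ((hperm.filter _).trans ?_)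
    rw [List.filter_append]
    have e1 : (α.map (fun a => 2 * a)).filter (fun c => c % 2 = 0) = α.map (fun a => 2 * a) := by
      rw [List.filter_eq_self]
      intro x hx
      rcases List.mem_map.mp hx with ⟨a, _, rfl⟩
      simp only [decide_eq_true_eq]
      omega
    have e2 : (β.map (fun b => 2 * b - 1)).filter (fun c => c % 2 = 0) = [] := by
      rw [List.filter_eq_nil_iff]
      intro x hx
      rcases List.mem_map.mp hx with ⟨b, hb, rfl⟩
      have := hβ.2 b hb
      simp only [decide_eq_true_eq]
      omega
    rw [e1, e2, List.append_nil]
  have hO : (merge2 α β).filter (fun c => c % 2 = 1) = β.map (fun b => 2 * b - 1) := by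
    apply List.Perm.eq_of_pairwise' ((merge2_sorted α β).filter _)
      (sorted_map (fun a b h => by omega) hβ.1) ((hperm.filter _).trans ?_)
    rw [List.filter_append]
    have e1 : (α.map (fun a => 2 * a)).filter (fun c => c % 2 = 1) = [] := by
      rw [List.filter_eq_nil_iff]
      intro x hx
      rcases List.mem_map.mp hx with ⟨a, _, rfl⟩
      simp only [decide_eq_true_eq]
      omega
    have e2 : (β.map (fun b => 2 * b - 1)).filter (fun c => c % 2 = 1)
        = β.map (fun b => 2 * b - 1) := by
      rw [List.filter_eq_self]
      intro x hx
      rcases List.mem_map.mp hx with ⟨b, hb, rfl⟩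
      have := hβ.2 b hb
      simp only [decide_eq_true_eq]
      omega
    rw [e1, e2, List.nil_append]
  have c1 : (toPair (merge2 α β)).1 = α := by
    show ((merge2 α β).filter (fun c => c % 2 = 0)).map (fun c => c / 2) = α
    rw [hE, List.map_map,
      List.map_congr_left (g := id) (fun a _ => by
        simp only [Function.comp_apply, id_eq]
        omega),
      List.map_id]
  have c2 : (toPair (merge2 α β)).2 = β := by
    show ((merge2 α β).filter (fun c => c % 2 = 1)).map (fun c => (c + 1) / 2) = β
    rw [hO, List.map_map,
      List.map_congr_left (g := id) (fun b hb => by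
        have := hβ.2 b hb
        simp only [Function.comp_apply, id_eq]
        omega),
      List.map_id]
  exact Prod.ext c1 c2

end SchmidtTwoAux

open SchmidtTwoAux List in
/-- Unrestricted Schmidt 2-partitions of `n` are equinumerous with bipartitions of `n`. -/
theorem unrestricted_schmidt_two (n : ℕ) :
    Nat.card {l : List ℕ // IsPartition l ∧ schmidtSum 2 l = n} =
      Nat.card {p : List ℕ × List ℕ //
        IsPartition p.1 ∧ IsPartition p.2 ∧ p.1.sum + p.2.sum = n} := by
  apply Nat.card_congr
  refine
    { toFun := fun x => ⟨toPair (conj x.1), ?_⟩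
      invFun := fun p => ⟨conj (merge2 p.1.1 p.1.2), ?_⟩
      left_inv := ?_
      right_inv := ?_ }
  · obtain ⟨l, ⟨hs, hp⟩, hn⟩ := x
    refine ⟨(toPair_partition (conj_sorted l) (conj_pos l)).1,
      (toPair_partition (conj_sorted l) (conj_pos l)).2, ?_⟩
    rw [sum_toPair, ← schmidt_conj hs hp]
    exact hn
  · obtain ⟨⟨α, β⟩, hα, hβ, hsum⟩ := p
    refine ⟨⟨conj_sorted _, conj_pos _⟩, ?_⟩
    rw [schmidt_conj (conj_sorted _) (conj_pos _),
      conj_conj (merge2_sorted α β) (merge2_pos hα.2 hβ.2),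
      sum_g_merge2 hβ.2]
    exact hsum
  · rintro ⟨l, ⟨hs, hp⟩, hn⟩
    apply Subtype.ext
    show conj (merge2 (toPair (conj l)).1 (toPair (conj l)).2) = l
    rw [merge2_toPair (conj_sorted l) (conj_pos l), conj_conj hs hp]
  · rintro ⟨⟨α, β⟩, hα, hβ, hsum⟩
    apply Subtype.ext
    show toPair (conj (conj (merge2 α β))) = (α, β)
    rw [conj_conj (merge2_sorted α β) (merge2_pos hα.2 hβ.2), toPair_merge2 hα hβ]
end

section
/- For k ≥ 2, the number of partitions λ₁ ≥ λ₂ ≥ ⋯ of positive integers with λ₁ + λ_{k+1} + λ_{2k+1} + ⋯ = n equals the number of k-tuples (α¹, …, αᵏ) of partitions with |α¹| + ⋯ + |αᵏ| = n. -/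
open Finset

namespace SchmidtAux

/-- value of the partition at 0-indexed position `i`, reconstructed from differences `d` -/
def pval (d : ℕ →₀ ℕ) (i : ℕ) : ℕ := ∑ j ∈ d.support.filter (fun j => i ≤ j), d j

lemma pval_antitone (d : ℕ →₀ ℕ) {i i' : ℕ} (h : i ≤ i') : pval d i' ≤ pval d i := by
  apply Finset.sum_le_sum_of_subset
  intro j hj
  simp only [Finset.mem_filter] at *
  exact ⟨hj.1, by omega⟩

lemma pval_succ (d : ℕ →₀ ℕ) (i : ℕ) : pval d i = d i + pval d (i + 1) := by
  classical
  unfold pval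
  by_cases h : i ∈ d.support
  · have hs : d.support.filter (fun j => i ≤ j)
        = insert i (d.support.filter (fun j => i + 1 ≤ j)) := by
      ext j
      simp only [Finset.mem_filter, Finset.mem_insert]
      constructor
      · rintro ⟨hj, hij⟩
        rcases Nat.eq_or_lt_of_le hij with h' | h'
        · exact Or.inl h'.symm
        · exact Or.inr ⟨hj, h'⟩
      · rintro (rfl | ⟨hj, hij⟩)
        · exact ⟨h, le_refl _⟩
        · exact ⟨hj, by omega⟩
    rw [hs, Finset.sum_insert (by simp)]
  · have hd : d i = 0 := Finsupp.notMem_support_iff.mp h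
    have hs : d.support.filter (fun j => i ≤ j)
        = d.support.filter (fun j => i + 1 ≤ j) := by
      ext j
      simp only [Finset.mem_filter]
      constructor
      · rintro ⟨hj, hij⟩
        have : j ≠ i := fun hji => h (hji ▸ hj)
        exact ⟨hj, by omega⟩
      · rintro ⟨hj, hij⟩
        exact ⟨hj, by omega⟩
    rw [hs, hd, Nat.zero_add]

/-- length of the partition reconstructed from `d` -/
def plen (d : ℕ →₀ ℕ) : ℕ := if h : d.support.Nonempty then d.support.max' h + 1 else 0

lemma lt_plen_of_mem {d : ℕ →₀ ℕ} {j : ℕ} (hj : j ∈ d.support) : j < plen d := by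
  unfold plen
  rw [dif_pos ⟨j, hj⟩]
  exact Nat.lt_succ_of_le (Finset.le_max' _ _ hj)

lemma plen_le {d : ℕ →₀ ℕ} {N : ℕ} (h : ∀ j ∈ d.support, j < N) : plen d ≤ N := by
  unfold plen
  split
  · next hne => have := h _ (d.support.max'_mem hne); omega
  · omega

lemma pval_eq_zero {d : ℕ →₀ ℕ} {i : ℕ} (h : plen d ≤ i) : pval d i = 0 := by
  refine Finset.sum_eq_zero fun j hj => ?_
  simp only [Finset.mem_filter] at hj
  exact absurd (lt_plen_of_mem hj.1) (by omega)

lemma pval_pos {d : ℕ →₀ ℕ} {i : ℕ} (h : i < plen d) : 0 < pval d i := by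
  have hne : d.support.Nonempty := by
    by_contra hne
    unfold plen at h
    rw [dif_neg hne] at h
    omega
  have hM : d.support.max' hne ∈ d.support := d.support.max'_mem hne
  have hiM : i ≤ d.support.max' hne := by
    unfold plen at h
    rw [dif_pos hne] at h
    omega
  have h1 : 0 < d (d.support.max' hne) :=
    Nat.pos_of_ne_zero (Finsupp.mem_support_iff.mp hM)
  have h2 : pval d (d.support.max' hne) ≤ pval d i := pval_antitone d hiM
  have h3 : d (d.support.max' hne) ≤ pval d (d.support.max' hne) := by
    rw [pval_succ]; omega
  omega

/-- the partition reconstructed from a difference function -/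
noncomputable def decode (d : ℕ →₀ ℕ) : List ℕ := (List.range (plen d)).map (pval d)

lemma decode_length (d : ℕ →₀ ℕ) : (decode d).length = plen d := by simp [decode]

lemma decode_getD (d : ℕ →₀ ℕ) (i : ℕ) : (decode d).getD i 0 = pval d i := by
  rcases lt_or_ge i (plen d) with h | h
  · rw [List.getD_eq_getElem _ _ (by simpa [decode] using h)]
    simp [decode]
  · rw [List.getD_eq_default _ _ (by simpa [decode] using h)]
    exact (pval_eq_zero h).symm

lemma decode_isPartition (d : ℕ →₀ ℕ) : IsPartition (decode d) := by
  constructor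
  · rw [decode, List.pairwise_map]
    exact (List.pairwise_lt_range).imp (fun h => pval_antitone d (le_of_lt h))
  · intro x hx
    simp only [decode, List.mem_map, List.mem_range] at hx
    obtain ⟨i, hi, rfl⟩ := hx
    exact pval_pos hi

/-- the difference function of a partition -/
noncomputable def encode (l : List ℕ) : ℕ →₀ ℕ :=
  Finsupp.onFinset (Finset.range l.length) (fun i => l.getD i 0 - l.getD (i+1) 0)
    (fun i hi => by
      simp only [Finset.mem_range]
      have hi' : l.getD i 0 - l.getD (i+1) 0 ≠ 0 := hi
      by_contra h
      have h0 : l.getD i 0 = 0 := List.getD_eq_default _ _ (by omega)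
      omega)

lemma encode_apply (l : List ℕ) (i : ℕ) : encode l i = l.getD i 0 - l.getD (i+1) 0 := rfl

lemma getD_antitone {l : List ℕ} (hl : l.Pairwise (· ≥ ·)) {i j : ℕ} (hij : i ≤ j) :
    l.getD j 0 ≤ l.getD i 0 := by
  rcases lt_or_ge j l.length with hj | hj
  · have hi : i < l.length := lt_of_le_of_lt hij hj
    rw [List.getD_eq_getElem _ _ hj, List.getD_eq_getElem _ _ hi]
    rcases Nat.eq_or_lt_of_le hij with rfl | h
    · exact le_refl _
    · exact (List.pairwise_iff_getElem.mp hl) i j hi hj h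
  · rw [List.getD_eq_default _ _ hj]
    exact Nat.zero_le _

lemma encode_support_lt (l : List ℕ) : ∀ j ∈ (encode l).support, j < l.length := by
  intro j hj
  have h1 := Finsupp.mem_support_iff.mp hj
  rw [encode_apply] at h1
  by_contra h
  have h0 : l.getD j 0 = 0 := List.getD_eq_default _ _ (by omega)
  omega

lemma pval_encode {l : List ℕ} (hl : IsPartition l) (i : ℕ) :
    pval (encode l) i = l.getD i 0 := by
  have hz : ∀ i, l.length ≤ i → pval (encode l) i = l.getD i 0 := by
    intro i hi
    rw [pval_eq_zero (le_trans (plen_le (encode_support_lt l)) hi),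
      List.getD_eq_default _ _ hi]
  have key : ∀ t i, l.length ≤ i + t → pval (encode l) i = l.getD i 0 := by
    intro t
    induction t with
    | zero => intro i hi; exact hz i (by omega)
    | succ t IH =>
      intro i hi
      rcases lt_or_ge i l.length with h | h
      · rw [pval_succ, IH (i+1) (by omega), encode_apply]
        have := getD_antitone hl.1 (Nat.le_succ i)
        simp only [Nat.succ_eq_add_one] at *
        omega
      · exact hz i h
  exact key l.length i (by omega)

lemma plen_encode {l : List ℕ} (hl : IsPartition l) : plen (encode l) = l.length := by
  rcases eq_or_ne l [] with rfl | hne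
  · have : plen (encode ([] : List ℕ)) ≤ 0 := plen_le (encode_support_lt [])
    simpa using this
  · have hlen : 0 < l.length := List.length_pos_iff.mpr hne
    have hpos : 0 < l.getD (l.length - 1) 0 := by
      rw [List.getD_eq_getElem _ _ (by omega)]
      exact hl.2 _ (List.getElem_mem _)
    have hz : l.getD (l.length - 1 + 1) 0 = 0 := List.getD_eq_default _ _ (by omega)
    have hmem : l.length - 1 ∈ (encode l).support := by
      rw [Finsupp.mem_support_iff, encode_apply, hz]
      omega
    have h1 := lt_plen_of_mem hmem
    have h2 := plen_le (encode_support_lt l)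
    omega

lemma decode_encode {l : List ℕ} (hl : IsPartition l) : decode (encode l) = l := by
  apply List.ext_getElem
  · rw [decode_length, plen_encode hl]
  · intro i h1 h2
    have h3 : (decode (encode l)).getD i 0 = l.getD i 0 := by
      rw [decode_getD, pval_encode hl]
    rwa [List.getD_eq_getElem _ _ h1, List.getD_eq_getElem _ _ h2] at h3

lemma encode_decode (d : ℕ →₀ ℕ) : encode (decode d) = d := by
  ext i
  rw [encode_apply, decode_getD, decode_getD, pval_succ d i]
  omega

lemma weighted_sum (d : ℕ →₀ ℕ) (F : ℕ → ℕ) :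
    ∑ i ∈ range (plen d), F i * pval d i
      = ∑ j ∈ d.support, (∑ i ∈ range (j+1), F i) * d j := by
  calc ∑ i ∈ range (plen d), F i * pval d i
      = ∑ i ∈ range (plen d), ∑ j ∈ d.support, if i ≤ j then F i * d j else 0 := by
        refine Finset.sum_congr rfl fun i _ => ?_
        rw [pval, Finset.sum_filter, Finset.mul_sum]
        exact Finset.sum_congr rfl fun j _ => by split <;> simp
    _ = ∑ j ∈ d.support, ∑ i ∈ range (plen d), if i ≤ j then F i * d j else 0 :=
        Finset.sum_comm
    _ = ∑ j ∈ d.support, (∑ i ∈ range (j+1), F i) * d j := by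
        refine Finset.sum_congr rfl fun j hj => ?_
        have hjL : j + 1 ≤ plen d := lt_plen_of_mem hj
        rw [← Finset.sum_filter]
        have hf : (range (plen d)).filter (fun i => i ≤ j) = range (j+1) := by
          ext i
          simp only [Finset.mem_filter, Finset.mem_range]
          omega
        rw [hf, ← Finset.sum_mul]

lemma count_mult (k : ℕ) (j : ℕ) :
    (∑ i ∈ range (j+1), if i % k = 0 then (1:ℕ) else 0) = j / k + 1 := by
  induction j with
  | zero => rw [Finset.sum_range_succ]; simp
  | succ j IH =>
    rw [Finset.sum_range_succ, IH, Nat.succ_div]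
    by_cases h : (j + 1) % k = 0
    · have hd : k ∣ (j + 1) := Nat.dvd_iff_mod_eq_zero.mpr h
      simp [h, hd]
    · have hd : ¬ k ∣ (j + 1) := fun hd => h (Nat.dvd_iff_mod_eq_zero.mp hd)
      simp [h, hd]

lemma schmidt_decode (k : ℕ) (d : ℕ →₀ ℕ) :
    schmidtSum k (decode d) = ∑ j ∈ d.support, (j / k + 1) * d j := by
  have h1 : schmidtSum k (decode d)
      = ∑ i ∈ range (plen d), (if i % k = 0 then 1 else 0) * pval d i := by
    rw [schmidtSum, decode_length]
    refine Finset.sum_congr rfl fun i _ => ?_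
    rw [decode_getD]
    split <;> simp
  rw [h1, weighted_sum]
  exact Finset.sum_congr rfl fun j _ => by rw [count_mult k]

lemma list_sum_getD (l : List ℕ) : l.sum = ∑ i ∈ range l.length, l.getD i 0 := by
  induction l with
  | nil => simp
  | cons a t IH =>
    rw [List.sum_cons, List.length_cons, Finset.sum_range_succ', IH]
    simp [List.getD_cons_succ, List.getD_cons_zero]
    omega

lemma sum_decode (d : ℕ →₀ ℕ) : (decode d).sum = ∑ j ∈ d.support, (j+1) * d j := by
  rw [list_sum_getD, decode_length]
  have h1 : ∀ i ∈ range (plen d), (decode d).getD i 0 = (fun _ => 1) i * pval d i :=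
    fun i _ => by rw [decode_getD, one_mul]
  rw [Finset.sum_congr rfl h1, weighted_sum]
  refine Finset.sum_congr rfl fun j _ => ?_
  simp

noncomputable def sliceF (k : ℕ) (hk : 0 < k) (d : ℕ →₀ ℕ) (r : ℕ) : ℕ →₀ ℕ :=
  Finsupp.onFinset (range (plen d)) (fun c => d (c * k + r)) (fun c hc => by
    simp only [Finset.mem_range]
    have hc' : d (c * k + r) ≠ 0 := hc
    have h1 : c * k + r < plen d := lt_plen_of_mem (Finsupp.mem_support_iff.mpr hc')
    have h2 : c ≤ c * k := Nat.le_mul_of_pos_right c hk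
    omega)

lemma sliceF_apply (k : ℕ) (hk : 0 < k) (d : ℕ →₀ ℕ) (r c : ℕ) :
    sliceF k hk d r c = d (c * k + r) := rfl

noncomputable def joinF (k : ℕ) (hk : 0 < k) (m : Fin k → (ℕ →₀ ℕ)) : ℕ →₀ ℕ :=
  Finsupp.onFinset
    (Finset.univ.biUnion fun r : Fin k => (m r).support.image (fun c => c * k + r.1))
    (fun j => m ⟨j % k, Nat.mod_lt j hk⟩ (j / k))
    (fun j hj => by
      simp only [Finset.mem_biUnion, Finset.mem_image]
      have hj' : m ⟨j % k, Nat.mod_lt j hk⟩ (j / k) ≠ 0 := hj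
      refine ⟨⟨j % k, Nat.mod_lt j hk⟩, Finset.mem_univ _, j / k,
        Finsupp.mem_support_iff.mpr hj', ?_⟩
      show j / k * k + j % k = j
      have := Nat.div_add_mod j k
      rw [Nat.mul_comm] at this
      omega)

lemma joinF_apply (k : ℕ) (hk : 0 < k) (m : Fin k → (ℕ →₀ ℕ)) (j : ℕ) :
    joinF k hk m j = m ⟨j % k, Nat.mod_lt j hk⟩ (j / k) := rfl

lemma sliceF_joinF {k : ℕ} (hk : 0 < k) (m : Fin k → (ℕ →₀ ℕ)) (r : Fin k) :
    sliceF k hk (joinF k hk m) r.1 = m r := by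
  ext c
  rw [sliceF_apply, joinF_apply]
  have h1 : (c * k + r.1) % k = r.1 := by
    rw [Nat.mul_comm, Nat.mul_add_mod, Nat.mod_eq_of_lt r.2]
  have h2 : (c * k + r.1) / k = c := by
    rw [Nat.mul_comm, Nat.mul_add_div hk, Nat.div_eq_of_lt r.2, Nat.add_zero]
  have h3 : (⟨(c * k + r.1) % k, Nat.mod_lt _ hk⟩ : Fin k) = r := Fin.ext h1
  rw [h3, h2]

lemma joinF_sliceF {k : ℕ} (hk : 0 < k) (d : ℕ →₀ ℕ) :
    joinF k hk (fun r => sliceF k hk d r.1) = d := by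
  ext j
  rw [joinF_apply]
  show d (j / k * k + j % k) = d j
  congr 1
  have := Nat.div_add_mod j k
  rw [Nat.mul_comm] at this
  omega

lemma range_mul_sum {k : ℕ} (hk : 0 < k) (f : ℕ → ℕ) (L : ℕ) :
    ∑ j ∈ range (L * k), (j / k + 1) * f j
      = ∑ r ∈ range k, ∑ c ∈ range L, (c + 1) * f (c * k + r) := by
  induction L with
  | zero => simp
  | succ L IH =>
    have h1 : (L + 1) * k = L * k + k := by ring
    have hsplit : ∑ j ∈ range (L * k + k), (j / k + 1) * f j
        = ∑ j ∈ range (L * k), (j / k + 1) * f j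
          + ∑ i ∈ Ico (L * k) (L * k + k), (i / k + 1) * f i := by
      rw [Finset.range_eq_Ico, ← Finset.sum_Ico_consecutive _ (Nat.zero_le (L * k))
        (by omega : L * k ≤ L * k + k), Finset.range_eq_Ico]
    have h3 : ∀ i ∈ range k, (L * k + i) / k + 1 = L + 1 := by
      intro i hi
      simp only [Finset.mem_range] at hi
      rw [Nat.mul_comm L k, Nat.mul_add_div hk, Nat.div_eq_of_lt hi]
    have hIco : ∑ i ∈ Ico (L * k) (L * k + k), (i / k + 1) * f i
        = ∑ i ∈ range k, (L + 1) * f (L * k + i) := by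
      rw [Finset.sum_Ico_eq_sum_range]
      have h2 : L * k + k - L * k = k := by omega
      rw [h2]
      exact Finset.sum_congr rfl fun i hi => by rw [h3 i hi]
    have hR : ∑ r ∈ range k, ∑ c ∈ range (L + 1), (c + 1) * f (c * k + r)
        = ∑ r ∈ range k, (∑ c ∈ range L, (c + 1) * f (c * k + r) + (L + 1) * f (L * k + r)) :=
      Finset.sum_congr rfl fun r _ => Finset.sum_range_succ _ _
    rw [h1, hsplit, hIco, IH, hR, Finset.sum_add_distrib]

lemma sum_transport {k : ℕ} (hk : 0 < k) (d : ℕ →₀ ℕ) :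
    ∑ j ∈ d.support, (j / k + 1) * d j
      = ∑ r : Fin k, ∑ c ∈ (sliceF k hk d r.1).support, (c + 1) * sliceF k hk d r.1 c := by
  have hL : ∀ j ∈ d.support, j < plen d * k := fun j hj => by
    have h1 := lt_plen_of_mem hj
    have h2 : plen d ≤ plen d * k := Nat.le_mul_of_pos_right _ hk
    omega
  have step1 : ∑ j ∈ d.support, (j / k + 1) * d j
      = ∑ j ∈ range (plen d * k), (j / k + 1) * d j := by
    apply Finset.sum_subset
    · intro j hj
      exact Finset.mem_range.mpr (hL j hj)
    · intro j _ hj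
      rw [Finsupp.notMem_support_iff.mp hj, Nat.mul_zero]
  have step2 : ∀ r : Fin k, ∑ c ∈ (sliceF k hk d r.1).support, (c + 1) * sliceF k hk d r.1 c
      = ∑ c ∈ range (plen d), (c + 1) * d (c * k + r.1) := by
    intro r
    have hsub : (sliceF k hk d r.1).support ⊆ range (plen d) := by
      intro c hc
      have hc' : d (c * k + r.1) ≠ 0 := by
        rw [← sliceF_apply k hk d r.1 c]
        exact Finsupp.mem_support_iff.mp hc
      have h1 : c * k + r.1 < plen d := lt_plen_of_mem (Finsupp.mem_support_iff.mpr hc')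
      have h2 : c ≤ c * k := Nat.le_mul_of_pos_right c hk
      exact Finset.mem_range.mpr (by omega)
    rw [Finset.sum_subset hsub
      (fun c _ hc => by rw [Finsupp.notMem_support_iff.mp hc, Nat.mul_zero])]
    exact Finset.sum_congr rfl fun c _ => by rw [sliceF_apply]
  rw [step1, range_mul_sum hk d (plen d), ← Fin.sum_univ_eq_sum_range]
  exact Finset.sum_congr rfl fun r _ => (step2 r).symm

/-- first equivalence: Schmidt partitions ↔ difference functions with weighted sum `n` -/
noncomputable def equiv1 (n k : ℕ) :
    {l : List ℕ // IsPartition l ∧ schmidtSum k l = n}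
      ≃ {d : ℕ →₀ ℕ // ∑ j ∈ d.support, (j / k + 1) * d j = n} where
  toFun x := ⟨encode x.1, by
    have := schmidt_decode k (encode x.1)
    rw [decode_encode x.2.1] at this
    rw [← this, x.2.2]⟩
  invFun x := ⟨decode x.1, decode_isPartition x.1, by rw [schmidt_decode]; exact x.2⟩
  left_inv x := Subtype.ext (decode_encode x.2.1)
  right_inv x := Subtype.ext (encode_decode x.1)

/-- second equivalence: reindexing differences into `k` slices -/
noncomputable def equiv2 (n k : ℕ) (hk : 0 < k) :
    {d : ℕ →₀ ℕ // ∑ j ∈ d.support, (j / k + 1) * d j = n}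
      ≃ {m : Fin k → (ℕ →₀ ℕ) //
          ∑ r : Fin k, ∑ c ∈ (m r).support, (c + 1) * m r c = n} where
  toFun x := ⟨fun r => sliceF k hk x.1 r.1, by rw [← sum_transport hk x.1]; exact x.2⟩
  invFun x := ⟨joinF k hk x.1, by
    rw [sum_transport hk]
    refine (Finset.sum_congr rfl fun r _ => ?_).trans x.2
    rw [sliceF_joinF hk x.1 r]⟩
  left_inv x := Subtype.ext (joinF_sliceF hk x.1)
  right_inv x := Subtype.ext (funext fun r => sliceF_joinF hk x.1 r)

/-- third equivalence: slices ↔ `k`-tuples of partitions -/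
noncomputable def equiv3 (n k : ℕ) :
    {m : Fin k → (ℕ →₀ ℕ) //
        ∑ r : Fin k, ∑ c ∈ (m r).support, (c + 1) * m r c = n}
      ≃ {α : Fin k → List ℕ // (∀ i, IsPartition (α i)) ∧ ∑ i, (α i).sum = n} where
  toFun x := ⟨fun r => decode (x.1 r), fun r => decode_isPartition _, by
    refine (Finset.sum_congr rfl fun r _ => ?_).trans x.2
    rw [sum_decode]⟩
  invFun x := ⟨fun r => encode (x.1 r), by
    refine (Finset.sum_congr rfl fun r _ => ?_).trans x.2.2
    have := sum_decode (encode (x.1 r))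
    rw [decode_encode (x.2.1 r)] at this
    rw [← this]⟩
  left_inv x := Subtype.ext (funext fun r => encode_decode (x.1 r))
  right_inv x := Subtype.ext (funext fun r => decode_encode (x.2.1 r))

end SchmidtAux

/-- Unrestricted Schmidt `k`-partitions of `n` are equinumerous with
`k`-tuple partitions of `n`. -/
theorem unrestricted_schmidt_k (n k : ℕ) (hk : 2 ≤ k) :
    Nat.card {l : List ℕ // IsPartition l ∧ schmidtSum k l = n} =
      Nat.card {α : Fin k → List ℕ //
        (∀ i, IsPartition (α i)) ∧ ∑ i, (α i).sum = n} := by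
  have hk' : 0 < k := by omega
  exact Nat.card_congr
    ((SchmidtAux.equiv1 n k).trans ((SchmidtAux.equiv2 n k hk').trans (SchmidtAux.equiv3 n k)))
end

section
/- For positive integers n, k, t, r with 1 ≤ r ≤ k, the number of k-tuples (α¹, …, αᵏ) of strict partitions with total weight n, where α¹, …, αʳ each have exactly t parts and α^{r+1}, …, αᵏ each have exactly t−1 parts, equals the number of strictly decreasing sequences of positive integers λ₁ > λ₂ > ⋯ > λ_{(t−1)k+r} with λ₁ + λ_{k+1} + λ_{2k+1} + ⋯ + λ_{(t−1)k+1} = n. -/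
open Finset

namespace SchmidtAux


variable {m : ℕ}

def toVec (f : Fin m → ℕ) (i : Fin m) : ℕ := ∑ j ∈ Finset.Ici i, f j

def toDiff (v : Fin m → ℕ) (i : Fin m) : ℕ :=
  v i - (if h : i.val + 1 < m then v ⟨i.val + 1, h⟩ else 0)

lemma Ici_succ (i : Fin m) (h : i.val + 1 < m) :
    Finset.Ici i = insert i (Finset.Ici (⟨i.val + 1, h⟩ : Fin m)) := by
  ext j
  simp only [Finset.mem_Ici, Finset.mem_insert, Fin.le_def, Fin.ext_iff]
  omega

lemma Ici_last (i : Fin m) (h : ¬ i.val + 1 < m) : Finset.Ici i = {i} := by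
  ext j
  simp only [Finset.mem_Ici, Finset.mem_singleton, Fin.le_def, Fin.ext_iff]
  omega

lemma toVec_rec (f : Fin m → ℕ) (i : Fin m) :
    toVec f i = f i + (if h : i.val + 1 < m then toVec f ⟨i.val + 1, h⟩ else 0) := by
  by_cases h : i.val + 1 < m
  · rw [toVec, Ici_succ i h, Finset.sum_insert (by simp [Fin.lt_def])]
    simp [h, toVec]
  · rw [toVec, Ici_last i h]
    simp [h]

lemma toDiff_toVec (f : Fin m → ℕ) : toDiff (toVec f) = f := by
  funext i
  rw [toDiff, toVec_rec f i]
  by_cases h : i.val + 1 < m <;> simp [h]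

lemma toVec_toDiff (v : Fin m → ℕ)
    (hv : ∀ i : Fin m, (if h : i.val + 1 < m then v ⟨i.val + 1, h⟩ else 0) ≤ v i) :
    toVec (toDiff v) = v := by
  suffices H : ∀ d (i : Fin m), m - i.val = d + 1 → toVec (toDiff v) i = v i by
    exact funext fun i => H (m - i.val - 1) i (by omega)
  intro d
  induction d with
  | zero =>
    intro i hi
    have h : ¬ i.val + 1 < m := by omega
    rw [toVec_rec, toDiff]
    simp only [h, dif_neg, not_false_iff, add_zero]
    have := hv i
    simp only [h, dif_neg, not_false_iff] at this
    omega
  | succ d ih =>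
    intro i hi
    have h : i.val + 1 < m := by omega
    rw [toVec_rec, toDiff]
    simp only [h, dif_pos]
    rw [ih ⟨i.val + 1, h⟩ (by simp; omega)]
    have := hv i
    simp only [h, dif_pos] at this
    omega

lemma toVec_strictAnti (f : Fin m → ℕ) (hf : ∀ i, 0 < f i) : StrictAnti (toVec f) := by
  intro i j hij
  refine Finset.sum_lt_sum_of_subset ?_ (Finset.mem_Ici.mpr le_rfl) ?_ (hf i) ?_
  · intro x hx
    simp only [Finset.mem_Ici] at *
    exact le_trans hij.le hx
  · simp [Finset.mem_Ici, not_le, hij]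
  · intros; exact Nat.zero_le _

lemma toVec_pos (f : Fin m → ℕ) (hf : ∀ i, 0 < f i) (i : Fin m) : 0 < toVec f i :=
  lt_of_lt_of_le (hf i) (Finset.single_le_sum (fun _ _ => Nat.zero_le _) (Finset.mem_Ici.mpr le_rfl))

lemma toDiff_pos (v : Fin m → ℕ) (hanti : StrictAnti v) (hpos : ∀ i, 0 < v i) (i : Fin m) :
    0 < toDiff v i := by
  rw [toDiff]
  by_cases h : i.val + 1 < m
  · simp only [h, dif_pos]
    have : v ⟨i.val + 1, h⟩ < v i := hanti (by simp [Fin.lt_def])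
    omega
  · simp only [h, dif_neg, not_false_iff]
    have := hpos i
    omega

lemma card_filter_mod (hk : 0 < k) (j : Fin m) :
    (Finset.univ.filter fun i : Fin m => i.val % k = 0 ∧ i ≤ j).card = j.val / k + 1 := by
  have : (Finset.univ.filter fun i : Fin m => i.val % k = 0 ∧ i ≤ j).card
      = (Finset.range (j.val / k + 1)).card := by
    refine Finset.card_bij' (fun i _ => i.val / k)
      (fun q hq => ⟨q * k, ?_⟩) ?_ ?_ ?_ ?_
    · have hq' : q ≤ j.val / k := by
        simp only [Finset.mem_range] at hq; omega
      calc q * k ≤ j.val / k * k := Nat.mul_le_mul_right k hq'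
        _ ≤ j.val := Nat.div_mul_le_self _ _
        _ < m := j.isLt
    · intro i hi
      simp only [Finset.mem_filter, Fin.le_def] at hi
      simp only [Finset.mem_range]
      have := Nat.div_le_div_right (c := k) hi.2.2
      omega
    · intro q hq
      simp only [Finset.mem_range] at hq
      simp only [Finset.mem_filter, Finset.mem_univ, true_and, Fin.le_def]
      constructor
      · simp [Nat.mul_mod_left]
      · calc q * k ≤ j.val / k * k := Nat.mul_le_mul_right k (by omega)
          _ ≤ j.val := Nat.div_mul_le_self _ _
    · intro i hi
      simp only [Finset.mem_filter] at hi
      apply Fin.ext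
      simp only
      exact Nat.div_mul_cancel (Nat.dvd_of_mod_eq_zero hi.2.1)
    · intro q hq
      simp [Nat.mul_div_cancel _ hk]
  rw [this, Finset.card_range]

lemma wsum (hk : 0 < k) (f : Fin m → ℕ) :
    (∑ i : Fin m, if i.val % k = 0 then toVec f i else 0)
      = ∑ i : Fin m, (i.val / k + 1) * f i := by
  have step1 : ∀ i : Fin m, (if i.val % k = 0 then toVec f i else 0)
      = ∑ j : Fin m, if i.val % k = 0 ∧ i ≤ j then f j else 0 := by
    intro i
    split_ifs with h
    · simp only [h, true_and]
      rw [toVec, ← Finset.sum_filter]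
      congr 1
      ext j
      simp
    · simp [h]
  rw [Finset.sum_congr rfl (fun i _ => step1 i), Finset.sum_comm]
  refine Finset.sum_congr rfl fun j _ => ?_
  rw [Finset.sum_ite, Finset.sum_const_zero, add_zero, Finset.sum_const, smul_eq_mul,
    card_filter_mod hk j]


/-- entries of a list as a vector -/
def vecOf (x : {l : List ℕ // IsStrict l ∧ l.length = m}) : Fin m → ℕ :=
  fun i => x.1.get (Fin.cast x.2.2.symm i)

lemma vecOf_strictAnti (x : {l : List ℕ // IsStrict l ∧ l.length = m}) : StrictAnti (vecOf x) := by
  intro i j hij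
  exact x.2.1.1.rel_get_of_lt (Fin.lt_def.mpr (Fin.lt_def.mp hij))

lemma vecOf_pos (x : {l : List ℕ // IsStrict l ∧ l.length = m}) (i : Fin m) : 0 < vecOf x i :=
  x.2.1.2 _ (by exact List.get_mem _ _)

lemma hv_of (x : {l : List ℕ // IsStrict l ∧ l.length = m}) (i : Fin m) :
    (if h : i.val + 1 < m then vecOf x ⟨i.val + 1, h⟩ else 0) ≤ vecOf x i := by
  by_cases h : i.val + 1 < m
  · simp only [h, dif_pos]
    exact (vecOf_strictAnti x (Fin.lt_def.mpr (by simp))).le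
  · simp [h]

lemma vecOf_ofFn (w : Fin m → ℕ) (hp : IsStrict (List.ofFn w) ∧ (List.ofFn w).length = m) :
    vecOf ⟨List.ofFn w, hp⟩ = w := by
  funext i
  show (List.ofFn w).get (Fin.cast hp.2.symm i) = w i
  rw [List.get_ofFn]
  congr 1

def SL : {l : List ℕ // IsStrict l ∧ l.length = m} ≃ {f : Fin m → ℕ // ∀ j, 0 < f j} where
  toFun x := ⟨toDiff (vecOf x), toDiff_pos _ (vecOf_strictAnti x) (vecOf_pos x)⟩
  invFun y := ⟨List.ofFn (toVec y.1),
    ⟨by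
      rw [IsStrict]
      constructor
      · rw [List.pairwise_iff_get]
        intro i j hij
        simp only [List.get_ofFn]
        exact toVec_strictAnti y.1 y.2 (Fin.lt_def.mpr (Fin.lt_def.mp hij))
      · intro x hx
        rw [List.mem_ofFn] at hx
        obtain ⟨i, rfl⟩ := hx
        exact toVec_pos y.1 y.2 i,
     by simp⟩⟩
  left_inv x := by
    apply Subtype.ext
    show (List.ofFn (toVec (toDiff (vecOf x))) : List ℕ) = x.1
    rw [toVec_toDiff (vecOf x) (hv_of x)]
    obtain ⟨l, hs, hm⟩ := x
    subst hm
    refine List.ext_getElem (by simp) fun i h1 h2 => ?_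
    simp [vecOf]
  right_inv y := by
    apply Subtype.ext
    show toDiff (vecOf ⟨List.ofFn (toVec y.1), _⟩) = y.1
    rw [vecOf_ofFn, toDiff_toVec]


lemma SL_schmidt (hk : 0 < k) (x : {l : List ℕ // IsStrict l ∧ l.length = m}) :
    schmidtSum k x.1 = ∑ i : Fin m, (i.val / k + 1) * (SL x).1 i := by
  have h1 : schmidtSum k x.1 = ∑ i : Fin m, (if i.val % k = 0 then vecOf x i else 0) := by
    rw [schmidtSum, x.2.2, ← Fin.sum_univ_eq_sum_range]
    refine Finset.sum_congr rfl fun i _ => ?_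
    split_ifs with h
    · rw [List.getD_eq_getElem x.1 0 (by rw [x.2.2]; exact i.isLt)]
      rfl
    · rfl
  rw [h1, ← toVec_toDiff (vecOf x) (hv_of x), wsum hk]
  rfl

lemma SL_sum (x : {l : List ℕ // IsStrict l ∧ l.length = m}) :
    x.1.sum = ∑ j : Fin m, (j.val + 1) * (SL x).1 j := by
  have h1 : x.1.sum = ∑ i : Fin m, vecOf x i := by
    conv_lhs => rw [← List.ofFn_get x.1]
    rw [List.sum_ofFn]
    exact Fintype.sum_equiv (finCongr x.2.2) _ _ (fun i => rfl)
  have h2 := wsum (k := 1) (m := m) Nat.one_pos (toDiff (vecOf x))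
  rw [toVec_toDiff (vecOf x) (hv_of x)] at h2
  simp only [Nat.mod_one, Nat.div_one, if_true] at h2
  rw [h1, h2]
  rfl

lemma g_congr {ℓ : Fin k → ℕ} (g : ∀ i, Fin (ℓ i) → ℕ) {i i' : Fin k} (h : i = i')
    {j : Fin (ℓ i)} {j' : Fin (ℓ i')} (hj : j.val = j'.val) : g i j = g i' j' := by
  subst h
  exact congrArg (g i) (Fin.ext hj)

lemma sigma_ext {ℓ : Fin k → ℕ} {p q : Σ i : Fin k, Fin (ℓ i)} (h1 : p.1 = q.1)
    (h2 : p.2.val = q.2.val) : p = q := by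
  obtain ⟨i, j⟩ := p
  obtain ⟨i', j'⟩ := q
  dsimp at h1 h2
  subst h1
  exact congrArg (Sigma.mk i) (Fin.ext h2)

lemma idx_mod (hk : 0 < k) {a b : ℕ} (hb : b < k) : (a * k + b) % k = b := by
  rw [add_comm, Nat.add_mul_mod_self_right, Nat.mod_eq_of_lt hb]

lemma idx_div (hk : 0 < k) {a b : ℕ} (hb : b < k) : (a * k + b) / k = a := by
  rw [add_comm, Nat.add_mul_div_right _ _ hk, Nat.div_eq_of_lt hb, zero_add]

def lenF (t r : ℕ) (i : Fin k) : ℕ := if i.val < r then t else t - 1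

section Reindex

variable (k t r : ℕ)

local notation "ℓ" => lenF (k := k) t r
local notation "m" => (t - 1) * k + r

lemma fact1 (i : Fin k) (j : Fin (ℓ i)) : j.val * k + i.val < m := by
  by_cases h : i.val < r
  · have hj : j.val < t := by have := j.isLt; simpa [lenF, h] using this
    have : j.val * k ≤ (t - 1) * k := Nat.mul_le_mul_right k (by omega)
    omega
  · have hj : j.val < t - 1 := by have := j.isLt; simpa [lenF, h] using this
    have h2 : (j.val + 1) * k ≤ (t - 1) * k := Nat.mul_le_mul_right k (by omega)
    have h3 : (j.val + 1) * k = j.val * k + k := by ring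
    omega

lemma fact2 (ht : 1 ≤ t) (hk : 0 < k) (hrk : r ≤ k) (x : Fin m) :
    x.val / k < ℓ (⟨x.val % k, Nat.mod_lt _ hk⟩ : Fin k) := by
  have hx := x.isLt
  have hdm := Nat.div_add_mod x.val k
  rw [lenF]
  by_cases h : x.val % k < r
  · rw [if_pos h, Nat.div_lt_iff_lt_mul hk]
    have h1 : (t - 1) * k + k = t * k := by
      have h0 : t - 1 + 1 = t := by omega
      calc (t - 1) * k + k = (t - 1 + 1) * k := by ring
        _ = t * k := by rw [h0]
    omega
  · rw [if_neg h]
    by_contra hc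
    push_neg at hc
    have h2 : (t - 1) * k ≤ x.val / k * k := Nat.mul_le_mul_right k hc
    have h3 : x.val / k * k = k * (x.val / k) := Nat.mul_comm _ _
    omega

def eIdx (ht : 1 ≤ t) (hk : 0 < k) (hrk : r ≤ k) : (Σ i : Fin k, Fin (ℓ i)) ≃ Fin m where
  toFun p := ⟨p.2.val * k + p.1.val, fact1 k t r p.1 p.2⟩
  invFun x := ⟨⟨x.val % k, Nat.mod_lt _ hk⟩, ⟨x.val / k, fact2 k t r ht hk hrk x⟩⟩
  left_inv p := by
    refine sigma_ext (Fin.ext ?_) ?_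
    · exact idx_mod hk p.1.isLt
    · exact idx_div hk p.1.isLt
  right_inv x := by
    apply Fin.ext
    show x.val / k * k + x.val % k = x.val
    have h1 := Nat.div_add_mod x.val k
    have h2 : x.val / k * k = k * (x.val / k) := Nat.mul_comm _ _
    omega

lemma sum_reindex (ht : 1 ≤ t) (hk : 0 < k) (hrk : r ≤ k) (f : Fin m → ℕ) :
    ∑ x : Fin m, (x.val / k + 1) * f x
      = ∑ i : Fin k, ∑ j : Fin (ℓ i), (j.val + 1) * f ⟨j.val * k + i.val, fact1 k t r i j⟩ := by
  rw [Finset.sum_sigma' Finset.univ (fun _ => Finset.univ)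
    (fun (i : Fin k) (j : Fin (ℓ i)) => (j.val + 1) * f ⟨j.val * k + i.val, fact1 k t r i j⟩),
    Finset.univ_sigma_univ]
  refine (Fintype.sum_equiv (eIdx k t r ht hk hrk) _ _ fun p => ?_).symm
  show (p.2.val + 1) * f ⟨p.2.val * k + p.1.val, _⟩
      = ((p.2.val * k + p.1.val) / k + 1) * f ⟨p.2.val * k + p.1.val, _⟩
  rw [idx_div hk p.1.isLt]

def reindexEquiv (n : ℕ) (ht : 1 ≤ t) (hk : 0 < k) (hrk : r ≤ k) :
    {g : ∀ i : Fin k, Fin (ℓ i) → ℕ //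
        (∀ i j, 0 < g i j) ∧ ∑ i, ∑ j, (j.val + 1) * g i j = n} ≃
    {f : Fin m → ℕ // (∀ x, 0 < f x) ∧ ∑ x, (x.val / k + 1) * f x = n} where
  toFun g := ⟨fun x => g.1 ⟨x.val % k, Nat.mod_lt _ hk⟩ ⟨x.val / k, fact2 k t r ht hk hrk x⟩,
    fun x => g.2.1 _ _, by
      refine (sum_reindex k t r ht hk hrk _).trans
        ((Finset.sum_congr rfl fun i _ => Finset.sum_congr rfl fun j _ =>
          congrArg _ (g_congr g.1 (Fin.ext (idx_mod hk i.isLt))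
            (idx_div hk i.isLt))).trans g.2.2)⟩
  invFun f := ⟨fun i j => f.1 ⟨j.val * k + i.val, fact1 k t r i j⟩,
    fun i j => f.2.1 _, by
      calc ∑ i : Fin k, ∑ j : Fin (ℓ i), (j.val + 1) * f.1 ⟨j.val * k + i.val, fact1 k t r i j⟩
          = ∑ x : Fin m, (x.val / k + 1) * f.1 x := (sum_reindex k t r ht hk hrk f.1).symm
        _ = n := f.2.2⟩
  left_inv g := by
    apply Subtype.ext
    funext i j
    show g.1 _ _ = g.1 i j
    exact g_congr g.1 (Fin.ext (idx_mod hk i.isLt)) (idx_div hk i.isLt)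
  right_inv f := by
    apply Subtype.ext
    funext x
    show f.1 _ = f.1 x
    refine congrArg f.1 (Fin.ext ?_)
    show x.val / k * k + x.val % k = x.val
    have h1 := Nat.div_add_mod x.val k
    have h2 : x.val / k * k = k * (x.val / k) := Nat.mul_comm _ _
    omega

end Reindex

def piSumEquiv {ι : Type*} [Fintype ι] {S T : ι → Type*} (e : ∀ i, S i ≃ T i)
    (F : ∀ i, S i → ℕ) (G : ∀ i, T i → ℕ) (h : ∀ i x, F i x = G i (e i x)) (n : ℕ) :
    {β : ∀ i, S i // ∑ i, F i (β i) = n} ≃ {g : ∀ i, T i // ∑ i, G i (g i) = n} where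
  toFun β := ⟨fun i => e i (β.1 i), by
    exact (Finset.sum_congr rfl fun i _ => (h i (β.1 i)).symm).trans β.2⟩
  invFun g := ⟨fun i => (e i).symm (g.1 i), by
    refine Eq.trans (Finset.sum_congr rfl fun i _ => ?_) g.2
    show F i ((e i).symm (g.1 i)) = G i (g.1 i)
    rw [h i, Equiv.apply_symm_apply]⟩
  left_inv β := Subtype.ext (funext fun i => (e i).symm_apply_apply _)
  right_inv g := Subtype.ext (funext fun i => (e i).apply_symm_apply _)

end SchmidtAux


/-- Schmidt `k`-partition theorem: `k`-tuples of strict partitions of total weight `n`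
with the first `r` of length `t` and the remaining of length `t-1` are equinumerous with
Schmidt `k`-partitions of `n` with `(t-1)k + r` parts. -/
theorem schmidt_k_partition (n k t r : ℕ) (hn : 1 ≤ n) (hk : 1 ≤ k) (ht : 1 ≤ t)
    (hr1 : 1 ≤ r) (hrk : r ≤ k) :
    Nat.card {α : Fin k → List ℕ //
        (∀ i, IsStrict (α i)) ∧
        (∀ i : Fin k, i.val < r → (α i).length = t) ∧
        (∀ i : Fin k, r ≤ i.val → (α i).length = t - 1) ∧
        ∑ i, (α i).sum = n} =
      Nat.card {l : List ℕ //
        IsStrict l ∧ l.length = (t - 1) * k + r ∧ schmidtSum k l = n} := by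
  classical
  have hk' : 0 < k := hk
  -- LHS chain
  let E1 : {α : Fin k → List ℕ //
        (∀ i, IsStrict (α i)) ∧
        (∀ i : Fin k, i.val < r → (α i).length = t) ∧
        (∀ i : Fin k, r ≤ i.val → (α i).length = t - 1) ∧
        ∑ i, (α i).sum = n} ≃
      {β : ∀ i : Fin k, {l : List ℕ // IsStrict l ∧ l.length = SchmidtAux.lenF t r i} //
        ∑ i, (β i).1.sum = n} :=
  { toFun := fun α => ⟨fun i => ⟨α.1 i, α.2.1 i, by
      simp only [SchmidtAux.lenF]
      split_ifs with h
      · exact α.2.2.1 i h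
      · exact α.2.2.2.1 i (le_of_not_gt h)⟩, α.2.2.2.2⟩
    invFun := fun β => ⟨fun i => (β.1 i).1, fun i => (β.1 i).2.1,
      fun i hi => by
        have := (β.1 i).2.2
        simpa only [SchmidtAux.lenF, if_pos hi] using this,
      fun i hi => by
        have := (β.1 i).2.2
        simpa only [SchmidtAux.lenF, if_neg (not_lt.mpr hi)] using this, β.2⟩
    left_inv := fun α => rfl
    right_inv := fun β => rfl }
  let E2 := SchmidtAux.piSumEquiv (fun i : Fin k => SchmidtAux.SL (m := SchmidtAux.lenF t r i))
    (fun i x => x.1.sum) (fun i y => ∑ j, (j.val + 1) * y.1 j)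
    (fun i x => SchmidtAux.SL_sum x) n
  let E3 : {g : ∀ i : Fin k, {f : Fin (SchmidtAux.lenF t r i) → ℕ // ∀ j, 0 < f j} //
        ∑ i, ∑ j, (j.val + 1) * (g i).1 j = n} ≃
      {g : ∀ i : Fin k, Fin (SchmidtAux.lenF t r i) → ℕ //
        (∀ i j, 0 < g i j) ∧ ∑ i, ∑ j, (j.val + 1) * g i j = n} :=
  { toFun := fun g => ⟨fun i => (g.1 i).1, fun i j => (g.1 i).2 j, g.2⟩
    invFun := fun g => ⟨fun i => ⟨g.1 i, fun j => g.2.1 i j⟩, g.2.2⟩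
    left_inv := fun g => rfl
    right_inv := fun g => rfl }
  let E4 := SchmidtAux.reindexEquiv k t r n ht hk' hrk
  -- RHS chain
  let E5 : {l : List ℕ // IsStrict l ∧ l.length = (t - 1) * k + r ∧ schmidtSum k l = n} ≃
      {x : {l : List ℕ // IsStrict l ∧ l.length = (t - 1) * k + r} // schmidtSum k x.1 = n} :=
  { toFun := fun x => ⟨⟨x.1, x.2.1, x.2.2.1⟩, x.2.2.2⟩
    invFun := fun y => ⟨y.1.1, y.1.2.1, y.1.2.2, y.2⟩
    left_inv := fun x => rfl
    right_inv := fun y => rfl }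
  let E6 : {x : {l : List ℕ // IsStrict l ∧ l.length = (t - 1) * k + r} // schmidtSum k x.1 = n} ≃
      {y : {f : Fin ((t - 1) * k + r) → ℕ // ∀ j, 0 < f j} //
        ∑ i, (i.val / k + 1) * y.1 i = n} :=
    Equiv.subtypeEquiv SchmidtAux.SL (fun x => by rw [SchmidtAux.SL_schmidt hk' x])
  let E7 : {y : {f : Fin ((t - 1) * k + r) → ℕ // ∀ j, 0 < f j} //
        ∑ i, (i.val / k + 1) * y.1 i = n} ≃
      {f : Fin ((t - 1) * k + r) → ℕ //
        (∀ x, 0 < f x) ∧ ∑ x, (x.val / k + 1) * f x = n} :=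
  { toFun := fun y => ⟨y.1.1, y.1.2, y.2⟩
    invFun := fun f => ⟨⟨f.1, f.2.1⟩, f.2.2⟩
    left_inv := fun y => rfl
    right_inv := fun f => rfl }
  exact Nat.card_congr (((E1.trans E2).trans E3).trans
    (E4.trans (((E5.trans E6).trans E7).symm)))
end

section
/- For positive integers n, k, t, r with 1 ≤ r ≤ k, the number of k-tuples (α¹, …, αᵏ) of partitions with total weight n such that max_i ℓ(αⁱ) = t and r is the largest index i with ℓ(αⁱ) = t, equals the number of weakly decreasing sequences of positive integers λ₁ ≥ ⋯ ≥ λ_{(t−1)k+r} with λ₁ + λ_{k+1} + λ_{2k+1} + ⋯ + λ_{(t−1)k+1} = n. -/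
namespace SchmidtAux





/-- downward induction -/
lemma down_ind {P : ℕ → Prop} (N : ℕ) (h0 : ∀ m, N ≤ m → P m)
    (hstep : ∀ m, m < N → P (m+1) → P m) : ∀ m, P m := by
  have key : ∀ d m, N ≤ m + d → P m := by
    intro d
    induction d with
    | zero => intro m h; exact h0 m (by omega)
    | succ d ih =>
      intro m h
      by_cases hm : N ≤ m
      · exact h0 m hm
      · exact hstep m (by omega) (ih (m+1) (by omega))
  intro m; exact key N m (by omega)

/-- getD of a sorted list is antitone -/
lemma getD_antitone_s4 {l : List ℕ} (hs : l.Pairwise (· ≥ ·)) :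
    Antitone (fun m => l.getD m 0) := by
  intro a b hab
  simp only
  by_cases hb : b < l.length
  · rw [l.getD_eq_getElem 0 hb, l.getD_eq_getElem 0 (lt_of_le_of_lt hab hb)]
    rcases eq_or_lt_of_le hab with h | h
    · subst h; exact le_refl _
    · exact List.pairwise_iff_getElem.mp hs a b (lt_of_le_of_lt hab hb) hb h
  · rw [l.getD_eq_default 0 (by omega)]
    exact Nat.zero_le _

lemma getD_pos {l : List ℕ} (hp : ∀ x ∈ l, 0 < x) {m : ℕ} (hm : m < l.length) :
    0 < l.getD m 0 := by
  rw [l.getD_eq_getElem 0 hm]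
  exact hp _ (l.getElem_mem hm)

lemma getD_pos_iff {l : List ℕ} (hp : ∀ x ∈ l, 0 < x) (m : ℕ) :
    l.getD m 0 ≠ 0 ↔ m < l.length := by
  constructor
  · intro h
    by_contra hm
    exact h (l.getD_eq_default 0 (by omega))
  · intro hm
    exact Nat.pos_iff_ne_zero.mp (getD_pos hp hm)




def toPart (f : ℕ → ℕ) (t : ℕ) : List ℕ :=
  (List.ofFn fun j : Fin t => f j.val).takeWhile (fun x => x != 0)

lemma toPart_spec (t : ℕ) (f : ℕ → ℕ) (hf : Antitone f) (h0 : ∀ j, t ≤ j → f j = 0) :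
    (∀ j, (toPart f t).getD j 0 = f j) ∧ IsPartition (toPart f t) ∧
      (∀ j, f j ≠ 0 ↔ j < (toPart f t).length) := by
  induction t generalizing f with
  | zero =>
    have : toPart f 0 = [] := by simp [toPart]
    rw [this]
    refine ⟨fun j => ?_, ⟨List.Pairwise.nil, by simp⟩, fun j => ?_⟩
    · simp [h0 j (Nat.zero_le j)]
    · simp [h0 j (Nat.zero_le j)]
  | succ t ih =>
    by_cases hf0 : f 0 = 0
    · have hall : ∀ j, f j = 0 := fun j => Nat.le_antisymm (hf0 ▸ hf (Nat.zero_le j)) (Nat.zero_le _)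
      have : toPart f (t+1) = [] := by
        simp [toPart, List.ofFn_succ, hf0]
      rw [this]
      refine ⟨fun j => by simp [hall j], ⟨List.Pairwise.nil, by simp⟩, fun j => by simp [hall j]⟩
    · have hT : toPart f (t+1) = f 0 :: toPart (fun j => f (j+1)) t := by
        simp only [toPart, List.ofFn_succ, List.takeWhile_cons]
        simp [hf0]
      obtain ⟨ih1, ⟨ih2s, ih2p⟩, ih3⟩ := ih (fun j => f (j+1))
        (fun a b hab => hf (by omega)) (fun j hj => h0 (j+1) (by omega))
      rw [hT]
      refine ⟨fun j => ?_, ⟨?_, ?_⟩, fun j => ?_⟩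
      · cases j with
        | zero => simp
        | succ j => simpa using ih1 j
      · rw [List.pairwise_cons]
        refine ⟨fun b hb => ?_, ih2s⟩
        obtain ⟨m, hm, rfl⟩ := List.getElem_of_mem hb
        have h1 := ih1 m
        rw [List.getD_eq_getElem _ _ hm] at h1
        rw [h1]
        exact hf (Nat.zero_le _)
      · intro x hx
        rcases List.mem_cons.mp hx with h | h
        · subst h; omega
        · exact ih2p x h
      · cases j with
        | zero => simpa using hf0
        | succ j => simpa using ih3 j

lemma toPart_getD (t : ℕ) (f : ℕ → ℕ) (hf : Antitone f) (h0 : ∀ j, t ≤ j → f j = 0) :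
    ∀ j, (toPart f t).getD j 0 = f j := (toPart_spec t f hf h0).1

lemma toPart_isPartition (t : ℕ) (f : ℕ → ℕ) (hf : Antitone f) (h0 : ∀ j, t ≤ j → f j = 0) :
    IsPartition (toPart f t) := (toPart_spec t f hf h0).2.1

lemma toPart_length_iff (t : ℕ) (f : ℕ → ℕ) (hf : Antitone f) (h0 : ∀ j, t ≤ j → f j = 0) :
    ∀ j, f j ≠ 0 ↔ j < (toPart f t).length := (toPart_spec t f hf h0).2.2

lemma toPart_length_le (t : ℕ) (f : ℕ → ℕ) : (toPart f t).length ≤ t := by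
  have := (List.takeWhile_prefix (l := List.ofFn fun j : Fin t => f j.val) (fun x => x != 0)).length_le
  simpa [toPart] using this


lemma list_eq_of_getD {l₁ l₂ : List ℕ} (h : ∀ m, l₁.getD m 0 = l₂.getD m 0)
    (hl : l₁.length = l₂.length) : l₁ = l₂ := by
  apply List.ext_getElem hl
  intro i h1 h2
  have := h i
  rwa [List.getD_eq_getElem _ _ h1, List.getD_eq_getElem _ _ h2] at this

lemma toPart_of_partition {l : List ℕ} (hl : IsPartition l) {t : ℕ} (hlt : l.length ≤ t) :
    toPart (fun j => l.getD j 0) t = l := by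
  have hf : Antitone (fun j => l.getD j 0) := getD_antitone_s4 hl.1
  have h0 : ∀ j, t ≤ j → l.getD j 0 = 0 := fun j hj => List.getD_eq_default _ _ (by omega)
  have hlen : (toPart (fun j => l.getD j 0) t).length = l.length := by
    have h1 := toPart_length_iff t _ hf h0
    have h2 := getD_pos_iff hl.2
    by_contra hne
    rcases Nat.lt_or_ge (toPart (fun j => l.getD j 0) t).length l.length with h | h
    · have := (h2 _).mpr h; have := (h1 _).mp this; omega
    · have hx : ¬ (l.getD l.length 0 ≠ 0) := by simp [h2]
      have : ¬ (l.length < (toPart (fun j => l.getD j 0) t).length) := fun hc => hx ((h1 _).mpr hc)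
      omega
  exact list_eq_of_getD (fun m => (toPart_getD t _ hf h0 m)) hlen

def Fv (k : ℕ) (α : Fin k → List ℕ) (m : ℕ) : ℕ :=
  ∑ i : Fin k, if m % k ≤ i.val then (α i).getD (m / k) 0 else (α i).getD (m / k + 1) 0

lemma Fv_step {k : ℕ} (hk : 0 < k) (α : Fin k → List ℕ) (m : ℕ) :
    Fv k α (m+1) + (α ⟨m % k, Nat.mod_lt m hk⟩).getD (m / k) 0 =
      Fv k α m + (α ⟨m % k, Nat.mod_lt m hk⟩).getD (m / k + 1) 0 := by
  set i0 : Fin k := ⟨m % k, Nat.mod_lt m hk⟩ with hi0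
  set j := m / k with hj
  set S : ℕ := ∑ i ∈ Finset.univ.erase i0,
      if m % k ≤ i.val then (α i).getD j 0 else (α i).getD (j+1) 0 with hS
  have hmem : i0 ∈ (Finset.univ : Finset (Fin k)) := Finset.mem_univ _
  have claim1 : Fv k α m = S + (α i0).getD j 0 := by
    rw [Fv, ← Finset.sum_erase_add _ _ hmem]
    simp [hS, hi0, hj]
  have hdm : k * (m / k) + m % k = m := Nat.div_add_mod m k
  have claim2 : Fv k α (m+1) = S + (α i0).getD (j+1) 0 := by
    by_cases hc : m % k + 1 < k
    · have hsucc : m + 1 = (m % k + 1) + k * (m / k) := by omega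
      have hmod : (m+1) % k = m % k + 1 := by
        rw [hsucc, Nat.add_mul_mod_self_left, Nat.mod_eq_of_lt hc]
      have hdiv : (m+1) / k = j := by
        rw [hsucc, Nat.add_mul_div_left _ _ hk, Nat.div_eq_of_lt hc, Nat.zero_add]
      rw [Fv, hmod, hdiv, ← Finset.sum_erase_add _ _ hmem]
      have : (if m % k + 1 ≤ i0.val then (α i0).getD j 0 else (α i0).getD (j+1) 0)
          = (α i0).getD (j+1) 0 := by
        simp [hi0]
      rw [this]
      congr 1
      apply Finset.sum_congr rfl
      intro i hi
      have hne : i.val ≠ m % k := by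
        intro h
        exact (Finset.mem_erase.mp hi).1 (Fin.ext h)
      by_cases h2 : m % k ≤ i.val
      · rw [if_pos h2, if_pos (by omega)]
      · rw [if_neg h2, if_neg (by omega)]
    · have hlt : m % k < k := Nat.mod_lt m hk
      have hexp : k * (j + 1) = k * j + k := by ring
      have hk1 : m % k = k - 1 := by omega
      have hsucc : m + 1 = k * (j + 1) := by
        rw [hexp, ← hdm, hk1, hj]
        omega
      have hmod : (m+1) % k = 0 := by rw [hsucc]; exact Nat.mul_mod_right _ _
      have hdiv : (m+1) / k = j + 1 := by
        rw [hsucc]; exact Nat.mul_div_cancel_left _ hk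
      rw [Fv, hmod, hdiv, ← Finset.sum_erase_add _ _ hmem]
      simp only [Nat.zero_le, if_pos]
      congr 1
      apply Finset.sum_congr rfl
      intro i hi
      have hne : i.val ≠ m % k := by
        intro h
        exact (Finset.mem_erase.mp hi).1 (Fin.ext h)
      have : ¬ (m % k ≤ i.val) := by
        have := i.isLt; omega
      rw [if_neg this]
  omega


lemma sum_getD {l : List ℕ} : ∀ {t : ℕ}, l.length ≤ t →
    ∑ j ∈ Finset.range t, l.getD j 0 = l.sum := by
  induction l with
  | nil => intro t _; simp
  | cons x xs ih =>
    intro t hlt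
    match t, hlt with
    | t'+1, hlt =>
      rw [Finset.sum_range_succ']
      simp only [List.getD_cons_succ, List.getD_cons_zero]
      rw [ih (by simpa using hlt)]
      simp [List.sum_cons, Nat.add_comm]

lemma sum_blocks {k : ℕ} (hk : 0 < k) (f : ℕ → ℕ) (t : ℕ) :
    ∑ m ∈ Finset.range (t*k), (if m % k = 0 then f m else 0) = ∑ j ∈ Finset.range t, f (j*k) := by
  induction t with
  | zero => simp
  | succ t ih =>
    have hsplit : (t+1)*k = t*k + k := by ring
    rw [hsplit, Finset.range_eq_Ico, ← Finset.sum_Ico_consecutive _ (Nat.zero_le (t*k)) (Nat.le_add_right _ _), ← Finset.range_eq_Ico, ih, Finset.sum_range_succ]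
    congr 1
    rw [Finset.sum_eq_single_of_mem (t*k)]
    · simp [Nat.mul_mod_left]
    · simp [Finset.mem_Ico]; omega
    · intro m hm hne
      rw [if_neg]
      intro hmod
      obtain ⟨c, rfl⟩ := Nat.dvd_iff_mod_eq_zero.mpr hmod
      rw [Finset.mem_Ico] at hm
      have hcomm : k * c = c * k := Nat.mul_comm k c
      have h1 : t ≤ c := by
        have := hm.1
        exact Nat.le_of_mul_le_mul_right (show t*k ≤ c*k by omega) hk
      have h2 : c < t + 1 := by
        have := hm.2
        have h3 : k * c < k * (t+1) := by
          calc k * c < t*k + k := hm.2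
          _ = k * (t+1) := by ring
        exact Nat.lt_of_mul_lt_mul_left h3
      have : c = t := by omega
      exact hne (by rw [this, Nat.mul_comm])




variable {k t r : ℕ} {α : Fin k → List ℕ}

def fwd (k t r : ℕ) (α : Fin k → List ℕ) : List ℕ :=
  List.ofFn fun m : Fin ((t-1)*k + r) => Fv k α m.val

lemma Fv_antitone (hk : 0 < k) (hpart : ∀ i, IsPartition (α i)) : Antitone (Fv k α) := by
  apply antitone_nat_of_succ_le
  intro m
  have hstep := Fv_step hk α m
  have hmono : (α ⟨m % k, Nat.mod_lt m hk⟩).getD (m/k+1) 0 ≤ (α ⟨m % k, Nat.mod_lt m hk⟩).getD (m/k) 0 :=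
    getD_antitone_s4 (hpart ⟨m % k, Nat.mod_lt m hk⟩).1 (Nat.le_succ (m/k))
  omega

lemma Fv_vanish (hk : 0 < k) (ht : 1 ≤ t) (hr1 : 1 ≤ r) (hrk : r ≤ k)
    (hle : ∀ i, (α i).length ≤ t) (hlt : ∀ i : Fin k, r ≤ i.val → (α i).length < t)
    {m : ℕ} (hm : (t-1)*k + r ≤ m) : Fv k α m = 0 := by
  apply Finset.sum_eq_zero
  intro i _
  have hile := hle i
  have hjge : t - 1 ≤ m / k := (Nat.le_div_iff_mul_le hk).mpr (by omega)
  by_cases hcase : t ≤ m / k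
  · split
    · exact List.getD_eq_default _ _ (le_trans (hle i) hcase)
    · exact List.getD_eq_default _ _ (le_trans (hle i) (by omega))
  · have hj : m / k = t - 1 := by omega
    have hdm := Nat.div_add_mod m k
    have hmul : k * (m/k) = (t-1) * k := by rw [hj]; ring
    have hge : r ≤ m % k := by omega
    split
    · next h =>
      have := hlt i (le_trans hge h)
      exact List.getD_eq_default _ _ (by omega)
    · exact List.getD_eq_default _ _ (by omega)

lemma Fv_last_pos (hk : 0 < k) (ht : 1 ≤ t) (hr1 : 1 ≤ r) (hrk : r ≤ k)
    (hpart : ∀ i, IsPartition (α i))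
    (heq : ∀ i : Fin k, i.val = r - 1 → (α i).length = t) :
    0 < Fv k α ((t-1)*k + (r-1)) := by
  set m := (t-1)*k + (r-1) with hmdef
  have hm2 : m = k*(t-1) + (r-1) := by rw [hmdef]; ring
  have hmod : m % k = r - 1 := by
    rw [hm2, Nat.mul_add_mod, Nat.mod_eq_of_lt (by omega)]
  have hdiv : m / k = t - 1 := by
    rw [hm2, Nat.mul_add_div hk, Nat.div_eq_of_lt (by omega)]
    omega
  set i₀ : Fin k := ⟨r-1, by omega⟩ with hi₀
  have hterm : (if m % k ≤ i₀.val then (α i₀).getD (m / k) 0 else (α i₀).getD (m / k + 1) 0)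
      = (α i₀).getD (t-1) 0 := by
    rw [if_pos (by rw [hmod]), hdiv]
  have hpos : 0 < (α i₀).getD (t-1) 0 :=
    getD_pos (hpart i₀).2 (by rw [heq i₀ rfl]; omega)
  calc 0 < (if m % k ≤ i₀.val then (α i₀).getD (m / k) 0 else (α i₀).getD (m / k + 1) 0) := by
        rw [hterm]; exact hpos
    _ ≤ Fv k α m := by
        rw [Fv]
        exact Finset.single_le_sum
          (f := fun i => if m % k ≤ i.val then (α i).getD (m / k) 0 else (α i).getD (m / k + 1) 0)
          (fun i _ => Nat.zero_le _) (Finset.mem_univ i₀)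

lemma Fv_pos (hk : 0 < k) (ht : 1 ≤ t) (hr1 : 1 ≤ r) (hrk : r ≤ k)
    (hpart : ∀ i, IsPartition (α i))
    (heq : ∀ i : Fin k, i.val = r - 1 → (α i).length = t)
    {m : ℕ} (hm : m < (t-1)*k + r) : 0 < Fv k α m := by
  have h1 := Fv_last_pos hk ht hr1 hrk hpart heq
  have h2 : Fv k α ((t-1)*k + (r-1)) ≤ Fv k α m :=
    Fv_antitone hk hpart (by omega)
  omega

lemma fwd_length : (fwd k t r α).length = (t-1)*k + r := by simp [fwd]

lemma fwd_getD (hk : 0 < k) (ht : 1 ≤ t) (hr1 : 1 ≤ r) (hrk : r ≤ k)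
    (hle : ∀ i, (α i).length ≤ t) (hlt : ∀ i : Fin k, r ≤ i.val → (α i).length < t)
    (m : ℕ) : (fwd k t r α).getD m 0 = Fv k α m := by
  by_cases hm : m < (t-1)*k + r
  · rw [List.getD_eq_getElem _ _ (by simpa [fwd] using hm)]
    simp [fwd]
  · rw [List.getD_eq_default _ _ (by simp [fwd]; omega)]
    exact (Fv_vanish hk ht hr1 hrk hle hlt (by omega)).symm

lemma fwd_partition (hk : 0 < k) (ht : 1 ≤ t) (hr1 : 1 ≤ r) (hrk : r ≤ k)
    (hpart : ∀ i, IsPartition (α i))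
    (heq : ∀ i : Fin k, i.val = r - 1 → (α i).length = t) :
    IsPartition (fwd k t r α) := by
  constructor
  · rw [List.pairwise_iff_getElem]
    intro a b ha hb hab
    simp only [fwd, List.getElem_ofFn]
    exact Fv_antitone hk hpart (le_of_lt hab)
  · intro x hx
    obtain ⟨m, hm, rfl⟩ := List.getElem_of_mem hx
    have hm' : m < (t-1)*k + r := by simpa [fwd] using hm
    simp only [fwd, List.getElem_ofFn]
    exact Fv_pos hk ht hr1 hrk hpart heq hm'

lemma fwd_schmidt (hk : 0 < k) (ht : 1 ≤ t) (hr1 : 1 ≤ r) (hrk : r ≤ k)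
    (hpart : ∀ i, IsPartition (α i))
    (hle : ∀ i, (α i).length ≤ t) (hlt : ∀ i : Fin k, r ≤ i.val → (α i).length < t) :
    schmidtSum k (fwd k t r α) = ∑ i, (α i).sum := by
  have hLle : (t-1)*k + r ≤ t*k := by
    have h2 : t - 1 + 1 = t := by omega
    have h1 : t*k = (t-1)*k + k := by nth_rewrite 1 [← h2]; rw [Nat.succ_mul]
    omega
  rw [schmidtSum, fwd_length]
  have step1 : ∀ m ∈ Finset.range ((t-1)*k + r),
      (if m % k = 0 then (fwd k t r α).getD m 0 else 0) = (if m % k = 0 then Fv k α m else 0) := by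
    intro m _
    rw [fwd_getD hk ht hr1 hrk hle hlt]
  rw [Finset.sum_congr rfl step1]
  rw [Finset.sum_subset (Finset.range_subset_range.mpr hLle) (by
    intro m hm1 hm2
    rw [Finset.mem_range] at hm1
    rw [Finset.mem_range, not_lt] at hm2
    split
    · exact Fv_vanish hk ht hr1 hrk hle hlt hm2
    · rfl)]
  rw [sum_blocks hk]
  have hFjk : ∀ j, Fv k α (j*k) = ∑ i, (α i).getD j 0 := by
    intro j
    have hmod : (j*k) % k = 0 := Nat.mul_mod_left j k
    have hdiv : (j*k) / k = j := Nat.mul_div_cancel j hk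
    rw [Fv, hmod, hdiv]
    simp
  rw [Finset.sum_congr rfl (fun j _ => hFjk j), Finset.sum_comm]
  exact Finset.sum_congr rfl (fun i _ => sum_getD (hle i))



variable {k t r : ℕ}

def aB (k t : ℕ) (l : List ℕ) (i : ℕ) (j : ℕ) : ℕ :=
  ∑ j' ∈ Finset.Ico j t, (l.getD (j'*k + i) 0 - l.getD (j'*k + i + 1) 0)

lemma aB_rec {l : List ℕ} {i j : ℕ} (hj : j < t) :
    aB k t l i j = (l.getD (j*k+i) 0 - l.getD (j*k+i+1) 0) + aB k t l i (j+1) :=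
  Finset.sum_eq_sum_Ico_succ_bot hj _

lemma aB_zero {l : List ℕ} {i j : ℕ} (hj : t ≤ j) : aB k t l i j = 0 := by
  rw [aB, Finset.Ico_eq_empty (by omega)]
  simp

lemma aB_antitone {l : List ℕ} {i : ℕ} : Antitone (aB k t l i) := by
  apply antitone_nat_of_succ_le
  intro j
  by_cases hj : j < t
  · rw [aB_rec hj]; omega
  · rw [aB_zero (by omega), aB_zero (by omega)]

def bwd (k t : ℕ) (l : List ℕ) (i : Fin k) : List ℕ := toPart (aB k t l i.val) t

lemma bwd_getD (l : List ℕ) (i : Fin k) (j : ℕ) :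
    (bwd k t l i).getD j 0 = aB k t l i.val j :=
  toPart_getD t _ aB_antitone (fun _ hj => aB_zero hj) j

lemma bwd_partition (l : List ℕ) (i : Fin k) : IsPartition (bwd k t l i) :=
  toPart_isPartition t _ aB_antitone (fun _ hj => aB_zero hj)

lemma bwd_length_le (l : List ℕ) (i : Fin k) : (bwd k t l i).length ≤ t :=
  toPart_length_le t _

lemma bwd_length_iff (l : List ℕ) (i : Fin k) (j : ℕ) :
    aB k t l i.val j ≠ 0 ↔ j < (bwd k t l i).length :=
  toPart_length_iff t _ aB_antitone (fun _ hj => aB_zero hj) j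

-- round trip 1 : bwd (fwd α) = α
lemma aB_fwd (hk : 0 < k) (ht : 1 ≤ t) (hr1 : 1 ≤ r) (hrk : r ≤ k)
    {α : Fin k → List ℕ}
    (hpart : ∀ i, IsPartition (α i))
    (hle : ∀ i, (α i).length ≤ t) (hlt : ∀ i : Fin k, r ≤ i.val → (α i).length < t)
    (i : Fin k) : ∀ j, aB k t (fwd k t r α) i.val j = (α i).getD j 0 := by
  apply down_ind (P := fun j => aB k t (fwd k t r α) i.val j = (α i).getD j 0) t
  · intro j hj
    rw [aB_zero hj, List.getD_eq_default _ _ (le_trans (hle i) hj)]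
  · intro j hj ih
    set m := j*k + i.val with hmdef
    have hm2 : m = k*j + i.val := by rw [hmdef]; ring
    have hmod : m % k = i.val := by
      rw [hm2, Nat.mul_add_mod, Nat.mod_eq_of_lt i.isLt]
    have hdiv : m / k = j := by
      rw [hm2, Nat.mul_add_div hk, Nat.div_eq_of_lt i.isLt]
      omega
    have hstep := Fv_step hk α m
    have hieq : (⟨m % k, Nat.mod_lt m hk⟩ : Fin k) = i := Fin.ext hmod
    rw [hieq, hdiv] at hstep
    have hanti : (α i).getD (j+1) 0 ≤ (α i).getD j 0 :=
      getD_antitone_s4 (hpart i).1 (Nat.le_succ j)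
    rw [aB_rec hj, ← hmdef, fwd_getD hk ht hr1 hrk hle hlt,
      fwd_getD hk ht hr1 hrk hle hlt, ih]
    omega

lemma bwd_fwd (hk : 0 < k) (ht : 1 ≤ t) (hr1 : 1 ≤ r) (hrk : r ≤ k)
    {α : Fin k → List ℕ}
    (hpart : ∀ i, IsPartition (α i))
    (hle : ∀ i, (α i).length ≤ t) (hlt : ∀ i : Fin k, r ≤ i.val → (α i).length < t) :
    bwd k t (fwd k t r α) = α := by
  funext i
  rw [bwd]
  have : aB k t (fwd k t r α) i.val = fun j => (α i).getD j 0 :=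
    funext (aB_fwd hk ht hr1 hrk hpart hle hlt i)
  rw [this]
  exact toPart_of_partition (hpart i) (hle i)

-- round trip 2 : fwd (bwd l) = l
lemma Fv_bwd (hk : 0 < k) (ht : 1 ≤ t) (hr1 : 1 ≤ r) (hrk : r ≤ k)
    {l : List ℕ} (hl : IsPartition l) (hlen : l.length = (t-1)*k + r) :
    ∀ m, Fv k (bwd k t l) m = l.getD m 0 := by
  have hLle : (t-1)*k + r ≤ t*k := by
    have h2 : t - 1 + 1 = t := by omega
    have h1 : t*k = (t-1)*k + k := by nth_rewrite 1 [← h2]; rw [Nat.succ_mul]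
    omega
  apply down_ind (P := fun m => Fv k (bwd k t l) m = l.getD m 0) (t*k)
  · intro m hm
    have hdge : t ≤ m / k := (Nat.le_div_iff_mul_le hk).mpr hm
    have h1 : Fv k (bwd k t l) m = 0 := by
      apply Finset.sum_eq_zero
      intro i _
      split
      · rw [bwd_getD, aB_zero hdge]
      · rw [bwd_getD, aB_zero (by omega)]
    rw [h1, List.getD_eq_default _ _ (by omega)]
  · intro m hm ih
    have hc1 : t*k = k*t := Nat.mul_comm t k
    have hjlt : m / k < t := Nat.div_lt_of_lt_mul (by omega)
    have hdm := Nat.div_add_mod m k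
    have hstep := Fv_step hk (bwd k t l) m
    set i₀ : Fin k := ⟨m % k, Nat.mod_lt m hk⟩ with hi₀
    rw [bwd_getD, bwd_getD] at hstep
    have hrec := aB_rec (k := k) (l := l) (i := i₀.val) hjlt
    have hmeq : (m/k)*k + i₀.val = m := by
      have h5 : i₀.val = m % k := rfl
      have hc2 : (m/k)*k = k*(m/k) := Nat.mul_comm _ _
      rw [h5]
      omega
    rw [hmeq] at hrec
    have hanti : l.getD (m+1) 0 ≤ l.getD m 0 := getD_antitone_s4 hl.1 (Nat.le_succ m)
    rw [ih] at hstep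
    omega


variable {k t r : ℕ}

lemma bwd_length_eq (hk : 0 < k) (ht : 1 ≤ t) (hr1 : 1 ≤ r) (hrk : r ≤ k)
    {l : List ℕ} (hl : IsPartition l) (hlen : l.length = (t-1)*k + r)
    (i : Fin k) (hi : i.val = r - 1) : (bwd k t l i).length = t := by
  have key : aB k t l i.val (t-1) ≠ 0 := by
    rw [aB_rec (by omega), aB_zero (j := t-1+1) (by omega)]
    have h1 : (t-1)*k + i.val < l.length := by omega
    have h2 : l.length ≤ (t-1)*k + i.val + 1 := by omega
    have h3 := getD_pos hl.2 h1
    rw [List.getD_eq_default _ _ h2]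
    omega
  have h4 := (bwd_length_iff (t := t) l i (t-1)).mp key
  have h5 := bwd_length_le (t := t) l i
  omega

lemma bwd_length_lt (hk : 0 < k) (ht : 1 ≤ t) (hr1 : 1 ≤ r) (hrk : r ≤ k)
    {l : List ℕ} (hl : IsPartition l) (hlen : l.length = (t-1)*k + r)
    (i : Fin k) (hi : r ≤ i.val) : (bwd k t l i).length < t := by
  have key : aB k t l i.val (t-1) = 0 := by
    rw [aB_rec (by omega), aB_zero (j := t-1+1) (by omega),
      List.getD_eq_default _ _ (by omega), List.getD_eq_default _ _ (by omega)]
  have h4 : ¬ (t - 1 < (bwd k t l i).length) := fun hc =>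
    ((bwd_length_iff (t := t) l i (t-1)).mpr hc) key
  have h5 := bwd_length_le (t := t) l i
  omega

lemma fwd_bwd (hk : 0 < k) (ht : 1 ≤ t) (hr1 : 1 ≤ r) (hrk : r ≤ k)
    {l : List ℕ} (hl : IsPartition l) (hlen : l.length = (t-1)*k + r) :
    fwd k t r (bwd k t l) = l := by
  apply list_eq_of_getD
  · intro m
    rw [fwd_getD hk ht hr1 hrk (fun i => bwd_length_le l i)
      (fun i hi => bwd_length_lt hk ht hr1 hrk hl hlen i hi),
      Fv_bwd hk ht hr1 hrk hl hlen]
  · rw [fwd_length, hlen]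


end SchmidtAux

open SchmidtAux in
/-- Unrestricted Schmidt `k`-partition theorem (refined): `k`-tuples of partitions of
total weight `n` with maximal length `t`, attained last at (1-based) index `r`, are
equinumerous with unrestricted Schmidt `k`-partitions of `n` of length `(t-1)k + r`. -/
theorem unrestricted_schmidt_k_refined (n k t r : ℕ) (hn : 1 ≤ n) (hk : 1 ≤ k)
    (ht : 1 ≤ t) (hr1 : 1 ≤ r) (hrk : r ≤ k) :
    Nat.card {α : Fin k → List ℕ //
        (∀ i, IsPartition (α i)) ∧
        (∀ i : Fin k, (α i).length ≤ t) ∧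
        (∀ i : Fin k, i.val = r - 1 → (α i).length = t) ∧
        (∀ i : Fin k, r ≤ i.val → (α i).length < t) ∧
        ∑ i, (α i).sum = n} =
      Nat.card {l : List ℕ //
        IsPartition l ∧ l.length = (t - 1) * k + r ∧ schmidtSum k l = n} := by
  apply Nat.card_congr
  exact
    { toFun := fun x =>
        ⟨fwd k t r x.1, by
          obtain ⟨hpart, hle, heq, hltc, hsum⟩ := x.2
          exact fwd_partition hk ht hr1 hrk hpart heq, by
          exact fwd_length, by
          obtain ⟨hpart, hle, heq, hltc, hsum⟩ := x.2
          rw [fwd_schmidt hk ht hr1 hrk hpart hle hltc]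
          exact hsum⟩
      invFun := fun y =>
        ⟨bwd k t y.1, by
          obtain ⟨hl, hlen, hss⟩ := y.2
          refine ⟨fun i => bwd_partition y.1 i, fun i => bwd_length_le y.1 i,
            fun i hi => bwd_length_eq hk ht hr1 hrk hl hlen i hi,
            fun i hi => bwd_length_lt hk ht hr1 hrk hl hlen i hi, ?_⟩
          rw [← fwd_schmidt hk ht hr1 hrk (fun i => bwd_partition y.1 i)
            (fun i => bwd_length_le y.1 i)
            (fun i hi => bwd_length_lt hk ht hr1 hrk hl hlen i hi),
            fwd_bwd hk ht hr1 hrk hl hlen]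
          exact hss⟩
      left_inv := fun x => by
        apply Subtype.ext
        exact bwd_fwd hk ht hr1 hrk x.2.1 x.2.2.1 x.2.2.2.2.1
      right_inv := fun y => by
        apply Subtype.ext
        exact fwd_bwd hk ht hr1 hrk y.2.1 y.2.2.1 }
end

section
/- The number of partitions of n whose Durfee square has side t equals the number of strictly decreasing sequences of positive integers λ₁ > λ₂ > ⋯ with exactly 2t or 2t−1 parts such that λ₁ + λ₃ + λ₅ + ⋯ = n. -/
/-- The Durfee square of the partition `l` has side `t`: `t` is the largest integer such
that `l` has at least `t` parts of size at least `t`. -/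
def HasDurfeeSide (l : List ℕ) (t : ℕ) : Prop :=
  (t ≤ l.length ∧ ∀ i < t, t ≤ l.getD i 0) ∧
  ¬ (t + 1 ≤ l.length ∧ ∀ i < t + 1, t + 1 ≤ l.getD i 0)

lemma count_le_iff (l : List ℕ) (hl : l.Pairwise (· ≥ ·)) (k j : ℕ) (hk : 1 ≤ k) :
    j < l.countP (fun x => decide (k ≤ x)) ↔ k ≤ l.getD j 0 := by
  induction l generalizing j with
  | nil => simp [Nat.lt_irrefl]; omega
  | cons x l ih =>
    rw [List.pairwise_cons] at hl
    rw [List.countP_cons]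
    have hzero : ¬ k ≤ x → l.countP (fun x => decide (k ≤ x)) = 0 := by
      intro hx
      rw [List.countP_eq_zero]
      intro a ha
      simp only [decide_eq_true_eq]
      exact fun h => hx (h.trans (hl.1 a ha))
    cases j with
    | zero =>
      simp only [List.getD_cons_zero]
      by_cases hx : k ≤ x
      · simp [hx]
      · simp [hx, hzero hx]
    | succ j =>
      simp only [List.getD_cons_succ]
      by_cases hx : k ≤ x
      · simp only [hx, decide_true, if_true]
        rw [← ih hl.2]
        omega
      · simp only [hx, decide_false, Bool.false_eq_true, if_false, hzero hx, Nat.add_zero]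
        constructor
        · omega
        · intro h
          exfalso
          rcases Nat.lt_or_ge j l.length with hj | hj
          · rw [List.getD_eq_getElem l 0 hj] at h
            have := hl.1 _ (List.getElem_mem hj)
            omega
          · rw [List.getD_eq_default] at h <;> omega

def conjF (l : List ℕ) : List ℕ :=
  (List.range' 1 (l.headD 0)).map (fun k => l.countP (fun x => decide (k ≤ x)))

def padz (t : ℕ) (l : List ℕ) : List ℕ := l ++ List.replicate (t - l.length) 0

lemma length_conjF (l : List ℕ) : (conjF l).length = l.headD 0 := by
  simp [conjF]

lemma getElem_conjF (l : List ℕ) (j : ℕ) (hj : j < (conjF l).length) :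
    (conjF l)[j] = l.countP (fun x => decide (j + 1 ≤ x)) := by
  simp only [conjF, List.getElem_map, List.getElem_range']
  have h : 1 + 1 * j = j + 1 := by omega
  rw [h]

lemma count_range' (m x : ℕ) :
    (List.range' 1 m).countP (fun k => decide (k ≤ x)) = min x m := by
  induction m with
  | zero => simp
  | succ m ih =>
    rw [List.range'_concat, List.countP_append, ih, List.countP_singleton]
    by_cases h : 1 + m ≤ x <;> simp [h] <;> omega

lemma sum_map_add {α : Type*} (L : List α) (p q : α → ℕ) :
    (L.map (fun k => p k + q k)).sum = (L.map p).sum + (L.map q).sum := by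
  induction L with
  | nil => simp
  | cons x L ih => simp [ih]; ring

lemma sum_map_ite {α : Type*} (L : List α) (p : α → Bool) :
    (L.map (fun k => if p k = true then 1 else 0)).sum = L.countP p := by
  induction L with
  | nil => simp
  | cons x L ih =>
    rw [List.map_cons, List.sum_cons, ih, List.countP_cons]
    by_cases h : p x <;> simp [h] <;> omega

lemma sum_conj_aux (m : ℕ) (l : List ℕ) :
    ((List.range' 1 m).map (fun k => l.countP (fun x => decide (k ≤ x)))).sum
      = (l.map (fun x => min x m)).sum := by
  induction l with
  | nil => simp
  | cons x l ih =>
    simp only [List.countP_cons, List.map_cons, List.sum_cons]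
    rw [sum_map_add, ih, sum_map_ite, count_range']
    omega

lemma mem_le_headD (l : List ℕ) (hl : l.Pairwise (· ≥ ·)) (x : ℕ) (hx : x ∈ l) :
    x ≤ l.headD 0 := by
  cases l with
  | nil => simp at hx
  | cons y l =>
    rw [List.pairwise_cons] at hl
    rcases List.mem_cons.1 hx with h | h
    · simp [h]
    · exact hl.1 x h

lemma sorted_conjF (l : List ℕ) : (conjF l).Pairwise (· ≥ ·) := by
  have h := List.pairwise_lt_range' (s := 1) (n := l.headD 0) 1
  exact h.map _ (fun a b hab => List.countP_mono_left (fun x _ hx => by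
    simp only [decide_eq_true_eq] at *
    omega))

lemma sum_conjF (l : List ℕ) (hl : l.Pairwise (· ≥ ·)) : (conjF l).sum = l.sum := by
  rw [conjF, sum_conj_aux]
  have : l.map (fun x => min x (l.headD 0)) = l.map id := by
    apply List.map_congr_left
    intro x hx
    show min x _ = x
    exact Nat.min_eq_left (mem_le_headD l hl x hx)
  rw [this, List.map_id]

lemma conjF_append_zeros (l : List ℕ) (k : ℕ) :
    conjF (l ++ List.replicate k 0) = conjF l := by
  have hhead : (l ++ List.replicate k 0).headD 0 = l.headD 0 := by
    cases l with
    | nil => cases k <;> simp [List.replicate_succ]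
    | cons x l => simp
  rw [conjF, conjF, hhead]
  apply List.map_congr_left
  intro a ha
  have ha1 : 1 ≤ a := by
    rw [List.mem_range'_1] at ha
    omega
  rw [List.countP_append]
  have : (List.replicate k 0).countP (fun x => decide (a ≤ x)) = 0 := by
    rw [List.countP_eq_zero]
    intro b hb
    rw [List.eq_of_mem_replicate hb]
    simpa using by omega
  omega

lemma headD_conjF (l : List ℕ) (hl : l.Pairwise (· ≥ ·)) :
    (conjF l).headD 0 = l.countP (fun x => decide (1 ≤ x)) := by
  rcases h : l.headD 0 with _ | m
  · have hnil : conjF l = [] := by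
      rw [← List.length_eq_zero_iff, length_conjF, h]
    rw [hnil, List.headD_nil]
    symm
    rw [List.countP_eq_zero]
    intro x hx
    have := mem_le_headD l hl x hx
    rw [h] at this
    simpa using by omega
  · have hlen : 0 < (conjF l).length := by rw [length_conjF, h]; omega
    obtain ⟨a, t, ha⟩ : ∃ a t, conjF l = a :: t := by
      cases hc : conjF l with
      | nil => rw [hc] at hlen; simp at hlen
      | cons a t => exact ⟨a, t, rfl⟩
    have hh : (conjF l).headD 0 = (conjF l).getD 0 0 := by rw [ha]; rfl
    rw [hh, List.getD_eq_getElem _ _ hlen, getElem_conjF]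

lemma conj_conj (l : List ℕ) (hl : l.Pairwise (· ≥ ·)) :
    padz l.length (conjF (conjF l)) = l := by
  have hp : (conjF (conjF l)).length = l.countP (fun x => decide (1 ≤ x)) := by
    rw [length_conjF, headD_conjF l hl]
  have hple : l.countP (fun x => decide (1 ≤ x)) ≤ l.length := List.countP_le_length
  apply List.ext_getElem
  · simp only [padz, List.length_append, List.length_replicate]
    omega
  · intro j h1 h2
    simp only [padz] at h1 ⊢
    by_cases hj : j < (conjF (conjF l)).length
    · rw [List.getElem_append_left hj, getElem_conjF]
      rw [conjF, List.countP_map]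
      have hcongr : ∀ k ∈ List.range' 1 (l.headD 0),
          (((fun y => decide (j + 1 ≤ y)) ∘ (fun k => l.countP (fun x => decide (k ≤ x)))) k = true
            ↔ (fun k => decide (k ≤ l.getD j 0)) k = true) := by
        intro k hk
        have hk1 : 1 ≤ k := by rw [List.mem_range'_1] at hk; omega
        simp only [Function.comp_apply, decide_eq_true_eq]
        exact count_le_iff l hl k j hk1
      rw [List.countP_congr hcongr, count_range', List.getD_eq_getElem l 0 h2]
      exact Nat.min_eq_left (mem_le_headD l hl _ (List.getElem_mem h2))
    · rw [List.getElem_append_right (by omega), List.getElem_replicate]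
      have hiff := count_le_iff l hl 1 j le_rfl
      rw [List.getD_eq_getElem l 0 h2] at hiff
      omega

lemma conj_conj_pos (l : List ℕ) (hl : l.Pairwise (· ≥ ·)) (hpos : ∀ x ∈ l, 0 < x) :
    conjF (conjF l) = l := by
  have h := conj_conj l hl
  have hlen : (conjF (conjF l)).length = l.length := by
    rw [length_conjF, headD_conjF l hl, List.countP_eq_length]
    intro a ha
    simpa using Nat.succ_le_of_lt (hpos a ha)
  rwa [padz, hlen, Nat.sub_self, List.replicate_zero, List.append_nil] at h

lemma mem_conjF (l : List ℕ) (hl : l.Pairwise (· ≥ ·)) (x : ℕ) (hx : x ∈ conjF l) :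
    0 < x ∧ x ≤ l.length := by
  constructor
  · obtain ⟨j, hj, rfl⟩ := List.mem_iff_getElem.1 hx
    rw [getElem_conjF]
    have hjh : j + 1 ≤ l.headD 0 := by rw [length_conjF] at hj; omega
    have hiff := count_le_iff l hl (j+1) 0 (by omega)
    have hD : j + 1 ≤ l.getD 0 0 := by
      cases l with
      | nil => simp at hjh
      | cons a t => simpa using hjh
    omega
  · obtain ⟨j, hj, rfl⟩ := List.mem_iff_getElem.1 hx
    rw [getElem_conjF]
    exact List.countP_le_length

lemma sum_map_addc (l : List ℕ) (t : ℕ) : (l.map (· + t)).sum = l.sum + l.length * t := by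
  induction l with
  | nil => simp
  | cons x l ih => simp [ih]; ring

lemma sum_map_subc (l : List ℕ) (t : ℕ) (h : ∀ x ∈ l, t ≤ x) :
    (l.map (· - t)).sum + l.length * t = l.sum := by
  induction l with
  | nil => simp
  | cons x l ih =>
    have hx := h x (List.mem_cons_self)
    have := ih (fun y hy => h y (List.mem_cons_of_mem x hy))
    simp only [List.map_cons, List.sum_cons, List.length_cons, Nat.succ_mul]
    omega

lemma sorted_getD_le (l : List ℕ) (hl : l.Pairwise (· ≥ ·)) {i j : ℕ} (hij : i ≤ j) :
    l.getD j 0 ≤ l.getD i 0 := by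
  rcases Nat.lt_or_ge j l.length with hj | hj
  · rcases Nat.eq_or_lt_of_le hij with rfl | hlt
    · exact le_rfl
    · rw [List.getD_eq_getElem l 0 hj, List.getD_eq_getElem l 0 (lt_of_le_of_lt hij hj)]
      exact List.pairwise_iff_getElem.1 hl i j _ hj hlt
  · rw [List.getD_eq_default l 0 hj]
    omega

def fA (t : ℕ) (p : List ℕ × List ℕ) : List ℕ := p.1.map (· + t) ++ conjF p.2

lemma fA_mem (t : ℕ) (ht : 1 ≤ t) (α β : List ℕ) (hα : α.Pairwise (· ≥ ·))
    (hβ : β.Pairwise (· ≥ ·)) (hαl : α.length = t) (hβl : β.length = t) :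
    IsPartition (fA t (α, β)) ∧ (fA t (α, β)).sum = t * t + α.sum + β.sum ∧
      HasDurfeeSide (fA t (α, β)) t := by
  have hc : ∀ x ∈ conjF β, 0 < x ∧ x ≤ t := by
    intro x hx
    have := mem_conjF β hβ x hx
    omega
  have hsorted : (fA t (α, β)).Pairwise (· ≥ ·) := by
    rw [fA, List.pairwise_append]
    refine ⟨hα.map _ (fun a b hab => by omega), sorted_conjF β, ?_⟩
    intro a ha b hb
    obtain ⟨x, _, rfl⟩ := List.mem_map.1 ha
    have := (hc b hb).2
    omega
  have hlen : (fA t (α, β)).length = t + (conjF β).length := by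
    simp [fA, hαl]
  have hgetD : ∀ i < t, (fA t (α, β)).getD i 0 = α.getD i 0 + t := by
    intro i hi
    have hi1 : i < (α.map (· + t)).length := by simp [hαl]; omega
    have hi2 : i < (fA t (α, β)).length := by omega
    simp only [fA] at hi2 ⊢
    rw [List.getD_eq_getElem _ 0 hi2, List.getElem_append_left hi1,
      List.getElem_map, ← List.getD_eq_getElem α 0 (by simp [hαl] at hi1 ⊢; omega)]
  refine ⟨⟨hsorted, ?_⟩, ?_, ⟨⟨by omega, ?_⟩, ?_⟩⟩
  · intro x hx
    rcases List.mem_append.1 hx with h | h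
    · obtain ⟨y, _, rfl⟩ := List.mem_map.1 h
      omega
    · exact (hc x h).1
  · rw [fA, List.sum_append, sum_map_addc, sum_conjF β hβ, hαl]
    ring
  · intro i hi
    rw [hgetD i hi]
    omega
  · rintro ⟨h1, h2⟩
    have ht2 := h2 t (by omega)
    cases hceq : conjF β with
    | nil =>
      rw [hceq] at hlen
      simp at hlen
      rw [List.getD_eq_default _ 0 (by omega)] at ht2
      omega
    | cons a cs =>
      have ha := (hc a (by rw [hceq]; exact List.mem_cons_self)).2
      have hlt : t < (fA t (α, β)).length := by rw [hlen, hceq]; simp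
      simp only [fA] at hlt ht2
      rw [List.getD_eq_getElem _ 0 hlt,
        List.getElem_append_right (by simp [hαl])] at ht2
      simp [hαl, hceq] at ht2
      omega

lemma fA_inj (t : ℕ) (α β α' β' : List ℕ) (hβ : β.Pairwise (· ≥ ·)) (hβ' : β'.Pairwise (· ≥ ·))
    (hαl : α.length = t) (hβl : β.length = t) (hαl' : α'.length = t) (hβl' : β'.length = t)
    (h : fA t (α, β) = fA t (α', β')) : α = α' ∧ β = β' := by
  have hlen : (α.map (· + t)).length = (α'.map (· + t)).length := by simp [hαl, hαl']
  obtain ⟨h1, h2⟩ := List.append_inj h (by simp [hαl, hαl'])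
  constructor
  · exact List.map_injective_iff.mpr (fun a b hab => by omega) h1
  · have hβc := conj_conj β hβ
    have hβc' := conj_conj β' hβ'
    rw [← hβc, ← hβc', h2, hβl, hβl']

lemma sorted_replicate0 (k : ℕ) : (List.replicate k (0:ℕ)).Pairwise (· ≥ ·) := by
  induction k with
  | zero => simp
  | succ k ih =>
    rw [List.replicate_succ, List.pairwise_cons]
    exact ⟨fun b hb => by rw [List.eq_of_mem_replicate hb], ih⟩

lemma fA_surj (t : ℕ) (ht : 1 ≤ t) (μ : List ℕ) (hs : μ.Pairwise (· ≥ ·))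
    (hpos : ∀ x ∈ μ, 0 < x) (hD : HasDurfeeSide μ t) :
    ∃ α β : List ℕ, α.Pairwise (· ≥ ·) ∧ β.Pairwise (· ≥ ·) ∧ α.length = t ∧ β.length = t ∧
      t * t + α.sum + β.sum = μ.sum ∧ fA t (α, β) = μ := by
  obtain ⟨⟨htlen, hDget⟩, hD2⟩ := hD
  set d := μ.drop t with hd
  have hdsorted : d.Pairwise (· ≥ ·) := hs.sublist (List.drop_sublist t μ)
  have hdpos : ∀ x ∈ d, 0 < x := fun x hx => hpos x (List.mem_of_mem_drop hx)
  have htake : ∀ x ∈ μ.take t, t ≤ x := by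
    intro x hx
    obtain ⟨i, hi, rfl⟩ := List.mem_iff_getElem.1 hx
    rw [List.getElem_take]
    have hit : i < t := by simp at hi; omega
    have := hDget i hit
    rwa [List.getD_eq_getElem μ 0 (by omega)] at this
  have hdhead : d.headD 0 ≤ t := by
    rcases Nat.lt_or_ge μ.length (t + 1) with hlen | hlen
    · have : d = [] := by
        rw [hd, List.drop_eq_nil_iff]
        omega
      simp [this]
    · have : ∃ i < t + 1, ¬ (t + 1 ≤ μ.getD i 0) := by
        by_contra hcon
        push_neg at hcon
        exact hD2 ⟨hlen, fun i hi => hcon i hi⟩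
      obtain ⟨i, hi, hgi⟩ := this
      have h1 : μ.getD t 0 ≤ μ.getD i 0 := sorted_getD_le μ hs (by omega)
      have h2 : d.headD 0 = μ.getD t 0 := by
        rw [List.headD_eq_head?_getD, hd, List.head?_drop, List.getD_eq_getElem?_getD]
      omega
  refine ⟨(μ.take t).map (· - t), padz t (conjF d), ?_, ?_, ?_, ?_, ?_, ?_⟩
  · exact (hs.sublist (List.take_sublist t μ)).map _ (fun a b hab => by omega)
  · rw [padz, List.pairwise_append]
    exact ⟨sorted_conjF d, sorted_replicate0 _,
      fun a _ b hb => by rw [List.eq_of_mem_replicate hb]; omega⟩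
  · simp [htlen]
  · rw [padz]
    simp only [List.length_append, List.length_replicate, length_conjF]
    omega
  · have h1 : ((μ.take t).map (· - t)).sum + (μ.take t).length * t = (μ.take t).sum :=
      sum_map_subc _ t htake
    have h2 : (padz t (conjF d)).sum = d.sum := by
      rw [padz, List.sum_append, sum_conjF d hdsorted]
      simp
    have h3 : (μ.take t).sum + d.sum = μ.sum := by
      rw [hd, ← List.sum_append, List.take_append_drop]
    have h4 : (μ.take t).length = t := by simp [htlen]
    rw [h2]
    rw [h4] at h1
    omega
  · have h1 : ((μ.take t).map (· - t)).map (· + t) = μ.take t := by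
      rw [List.map_map]
      have : ∀ x ∈ μ.take t, ((· + t) ∘ (· - t)) x = id x := by
        intro x hx
        have := htake x hx
        simp only [Function.comp_apply, id]
        omega
      rw [List.map_congr_left this, List.map_id]
    have h2 : conjF (padz t (conjF d)) = d := by
      rw [padz, conjF_append_zeros, conj_conj_pos d hdsorted hdpos]
    show ((μ.take t).map (· - t)).map (· + t) ++ conjF (padz t (conjF d)) = μ
    rw [h1, h2, List.take_append_drop]

def mk2 : List ℕ → List ℕ → List ℕ
  | a :: as, b :: bs => (a + b + 2 * bs.length + 1) :: (as.headD 0 + b + 2 * bs.length) :: mk2 as bs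
  | _, _ => []

lemma mk2_nil : mk2 [] [] = [] := rfl

lemma mk2_cons (a b : ℕ) (as bs : List ℕ) :
    mk2 (a :: as) (b :: bs)
      = (a + b + 2 * bs.length + 1) :: (as.headD 0 + b + 2 * bs.length) :: mk2 as bs := rfl

lemma mk2_length : ∀ (α β : List ℕ), α.length = β.length → (mk2 α β).length = 2 * β.length
  | [], [], _ => rfl
  | a :: as, b :: bs, h => by
    rw [mk2_cons]
    simp only [List.length_cons] at h ⊢
    rw [mk2_length as bs (by omega)]
    omega

lemma schmidt_cons2 (x y : ℕ) (l : List ℕ) :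
    schmidtSum 2 (x :: y :: l) = x + schmidtSum 2 l := by
  rw [schmidtSum, schmidtSum]
  have hlen : (x :: y :: l).length = l.length + 1 + 1 := by simp
  rw [hlen, Finset.sum_range_succ', Finset.sum_range_succ']
  have hmod : ∀ i : ℕ, (i + 1 + 1) % 2 = i % 2 := fun i => by omega
  simp only [hmod, List.getD_cons_succ, List.getD_cons_zero]
  norm_num
  omega

lemma mk2_schmidt : ∀ (α β : List ℕ), α.length = β.length →
    schmidtSum 2 (mk2 α β) = β.length * β.length + α.sum + β.sum
  | [], [], _ => by simp [mk2_nil, schmidtSum]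
  | a :: as, b :: bs, h => by
    rw [mk2_cons, schmidt_cons2]
    simp only [List.length_cons] at h ⊢
    rw [mk2_schmidt as bs (by omega)]
    have h2 : as.length = bs.length := by omega
    have h3 : (bs.length + 1) * (bs.length + 1) = bs.length * bs.length + 2 * bs.length + 1 := by
      ring
    simp only [List.sum_cons]
    omega

lemma mk2_chain : ∀ (α β : List ℕ), α.Pairwise (· ≥ ·) → β.Pairwise (· ≥ ·) →
    α.length = β.length → List.IsChain (· > ·) (mk2 α β)
  | [], [], _, _, _ => List.isChain_nil
  | a :: as, b :: bs, hα, hβ, h => by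
    rw [mk2_cons]
    rw [List.pairwise_cons] at hα hβ
    have h1 : as.length = bs.length := by simp at h; omega
    have ih := mk2_chain as bs hα.2 hβ.2 h1
    rw [List.isChain_cons_cons]
    constructor
    · have : as.headD 0 ≤ a := by
        cases as with
        | nil => simp
        | cons a' as' => exact hα.1 a' (List.mem_cons_self)
      omega
    · rw [List.isChain_cons]
      refine ⟨?_, ih⟩
      intro z hz
      cases has : as with
      | nil =>
        have : bs = [] := by rw [has] at h1; simpa using h1.symm
        rw [has, this, mk2_nil] at hz
        simp at hz
      | cons a' as' =>
        obtain ⟨b', bs', hbs⟩ : ∃ b' bs', bs = b' :: bs' := by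
          cases bs with
          | nil => rw [has] at h1; simp at h1
          | cons b' bs' => exact ⟨b', bs', rfl⟩
        rw [has, hbs, mk2_cons] at hz
        simp only [List.head?_cons, Option.mem_some_iff] at hz
        subst hz
        have hb : b' ≤ b := hβ.1 b' (by rw [hbs]; exact List.mem_cons_self)
        have : bs.length = bs'.length + 1 := by rw [hbs]; simp
        simp only [List.headD_cons]
        omega

lemma mk2_inj : ∀ (α β α' β' : List ℕ), α.length = β.length → α'.length = β'.length →
    α.length = α'.length → mk2 α β = mk2 α' β' → α = α' ∧ β = β'
  | [], [], [], [], _, _, _, _ => ⟨rfl, rfl⟩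
  | [], [], a' :: as', b' :: bs', h1, h2, h3, _ => by simp at h3
  | a :: as, b :: bs, [], [], h1, h2, h3, _ => by simp at h3
  | [], b :: bs, _, _, h1, _, _, _ => by simp at h1
  | a :: as, [], _, _, h1, _, _, _ => by simp at h1
  | _, _, [], b' :: bs', _, h2, _, _ => by simp at h2
  | _, _, a' :: as', [], _, h2, _, _ => by simp at h2
  | a :: as, b :: bs, a' :: as', b' :: bs', h1, h2, h3, heq => by
    rw [mk2_cons, mk2_cons] at heq
    simp only [List.cons.injEq] at heq
    obtain ⟨e1, e2, e3⟩ := heq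
    obtain ⟨ea, eb⟩ := mk2_inj as bs as' bs'
      (by simp at h1; omega) (by simp at h2; omega) (by simp at h3; omega) e3
    subst ea; subst eb
    have : b = b' := by omega
    subst this
    have : a = a' := by omega
    subst this
    exact ⟨rfl, rfl⟩

lemma mk2_surj : ∀ (t : ℕ) (l : List ℕ), List.IsChain (· > ·) l → l.length = 2 * t →
    ∃ α β : List ℕ, α.Pairwise (· ≥ ·) ∧ β.Pairwise (· ≥ ·) ∧ α.length = t ∧ β.length = t ∧
      mk2 α β = l
  | 0, l, _, hl => by
    obtain rfl : l = [] := List.length_eq_zero_iff.1 (by omega)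
    exact ⟨[], [], by simp, by simp, rfl, rfl, rfl⟩
  | (t+1), [], _, hl => by simp at hl
  | (t+1), [x], _, hl => by simp at hl; omega
  | (t+1), x :: y :: rest, hc, hl => by
    have hrest : rest.length = 2 * t := by simp at hl; omega
    rw [List.isChain_cons_cons] at hc
    obtain ⟨hxy, hc2⟩ := hc
    have hcrest : List.IsChain (· > ·) rest := hc2.tail
    obtain ⟨as, bs, has, hbs, hal, hbl, heq⟩ := mk2_surj t rest hcrest hrest
    cases t with
    | zero =>
      have h1 : as = [] := List.length_eq_zero_iff.1 hal
      have h2 : bs = [] := List.length_eq_zero_iff.1 hbl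
      have h3 : rest = [] := by subst h1 h2; rw [← heq]; rfl
      refine ⟨[x - y - 1], [y], by simp, by simp, rfl, rfl, ?_⟩
      rw [h3, mk2_cons, mk2_nil]
      simp only [List.headD_nil, List.length_nil]
      have : x - y - 1 + y + 2 * 0 + 1 = x := by omega
      rw [this]
      norm_num
    | succ t =>
      obtain ⟨a', as', has'⟩ : ∃ a' as', as = a' :: as' := by
        cases as with
        | nil => simp at hal
        | cons a' as' => exact ⟨a', as', rfl⟩
      obtain ⟨b', bs', hbs'⟩ : ∃ b' bs', bs = b' :: bs' := by
        cases bs with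
        | nil => simp at hbl
        | cons b' bs' => exact ⟨b', bs', rfl⟩
      obtain ⟨x', rest', hrest'⟩ : ∃ x' rest', rest = x' :: rest' := by
        cases rest with
        | nil => simp at hrest
        | cons x' rest' => exact ⟨x', rest', rfl⟩
      have hyx' : y > x' := by
        rw [hrest'] at hc2
        exact (List.isChain_cons.1 hc2).1 x' (by simp)
      have hhead : x' = a' + b' + 2 * bs'.length + 1 := by
        rw [has', hbs', mk2_cons, hrest'] at heq
        simp only [List.cons.injEq] at heq
        omega
      refine ⟨(x - y - 1 + a') :: as, (y - x' - 1 + b') :: bs, ?_, ?_, ?_, ?_, ?_⟩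
      · rw [List.pairwise_cons]
        refine ⟨fun z hz => ?_, has⟩
        have hz' : z ≤ as.headD 0 := mem_le_headD as has z hz
        rw [has'] at hz'
        simp only [List.headD_cons] at hz'
        omega
      · rw [List.pairwise_cons]
        refine ⟨fun z hz => ?_, hbs⟩
        have hz' : z ≤ bs.headD 0 := mem_le_headD bs hbs z hz
        rw [hbs'] at hz'
        simp only [List.headD_cons] at hz'
        omega
      · simp [hal]
      · simp [hbl]
      · rw [mk2_cons, heq]
        have hbsl2 : bs.length = bs'.length + 1 := by rw [hbs']; rfl
        have e1 : x - y - 1 + a' + (y - x' - 1 + b') + 2 * bs.length + 1 = x := by omega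
        have e2 : as.headD 0 + (y - x' - 1 + b') + 2 * bs.length = y := by
          rw [has', List.headD_cons]
          omega
        rw [e1, e2]

lemma schmidt_append_zero (k : ℕ) (l : List ℕ) :
    schmidtSum k (l ++ [0]) = schmidtSum k l := by
  rw [schmidtSum, schmidtSum]
  have hlen : (l ++ [0]).length = l.length + 1 := by simp
  rw [hlen, Finset.sum_range_succ]
  have h1 : ∀ i ∈ Finset.range l.length,
      (if i % k = 0 then (l ++ [0]).getD i 0 else 0) = (if i % k = 0 then l.getD i 0 else 0) := by
    intro i hi
    rw [Finset.mem_range] at hi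
    rw [List.getD_append l [0] 0 i hi]
  rw [Finset.sum_congr rfl h1]
  have h2 : (l ++ [0]).getD l.length 0 = 0 := by
    rw [List.getD_eq_getElem _ 0 (by simp)]
    rw [List.getElem_append_right (by omega)]
    simp
  rw [h2]
  simp

theorem durfee_schmidt_aux (n t : ℕ) (ht : 1 ≤ t) :
    Nat.card {l : List ℕ // IsPartition l ∧ l.sum = n ∧ HasDurfeeSide l t} =
      Nat.card {l : List ℕ // IsStrict l ∧
        (l.length = 2 * t ∨ l.length = 2 * t - 1) ∧ schmidtSum 2 l = n} := by
  have hA : Nat.card {p : List ℕ × List ℕ // p.1.Pairwise (· ≥ ·) ∧ p.2.Pairwise (· ≥ ·) ∧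
      p.1.length = t ∧ p.2.length = t ∧ t * t + p.1.sum + p.2.sum = n}
      = Nat.card {l : List ℕ // IsPartition l ∧ l.sum = n ∧ HasDurfeeSide l t} := by
    apply Nat.card_eq_of_bijective (fun p =>
      ⟨fA t p.val, by
        obtain ⟨⟨α, β⟩, h1, h2, h3, h4, h5⟩ := p
        obtain ⟨hp, hsum, hd⟩ := fA_mem t ht α β h1 h2 h3 h4
        exact ⟨hp, by rw [hsum]; exact h5, hd⟩⟩)
    constructor
    · rintro ⟨⟨α, β⟩, h1, h2, h3, h4, h5⟩ ⟨⟨α', β'⟩, h1', h2', h3', h4', h5'⟩ heq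
      simp only [Subtype.mk.injEq] at heq ⊢
      obtain ⟨e1, e2⟩ := fA_inj t α β α' β' h2 h2' h3 h4 h3' h4' heq
      exact Prod.ext e1 e2
    · rintro ⟨μ, ⟨hs, hpos⟩, hsum, hd⟩
      obtain ⟨α, β, g1, g2, g3, g4, g5, g6⟩ := fA_surj t ht μ hs hpos hd
      exact ⟨⟨(α, β), g1, g2, g3, g4, by rw [g5, hsum]⟩, Subtype.ext g6⟩
  have hB : Nat.card {p : List ℕ × List ℕ // p.1.Pairwise (· ≥ ·) ∧ p.2.Pairwise (· ≥ ·) ∧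
      p.1.length = t ∧ p.2.length = t ∧ t * t + p.1.sum + p.2.sum = n}
      = Nat.card {l : List ℕ // l.Pairwise (· > ·) ∧ l.length = 2 * t ∧ schmidtSum 2 l = n} := by
    apply Nat.card_eq_of_bijective (fun p =>
      ⟨mk2 p.val.1 p.val.2, by
        obtain ⟨⟨α, β⟩, h1, h2, h3, h4, h5⟩ := p
        dsimp only at h1 h2 h3 h4 h5 ⊢
        refine ⟨List.isChain_iff_pairwise.1 (mk2_chain α β h1 h2 (by omega)), ?_, ?_⟩
        · rw [mk2_length α β (by omega), h4]
        · rw [mk2_schmidt α β (by omega), h4, ← h5]⟩)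
    constructor
    · rintro ⟨⟨α, β⟩, h1, h2, h3, h4, h5⟩ ⟨⟨α', β'⟩, h1', h2', h3', h4', h5'⟩ heq
      simp only [Subtype.mk.injEq] at heq ⊢
      dsimp only at h3 h4 h3' h4' heq
      obtain ⟨e1, e2⟩ := mk2_inj α β α' β' (by omega) (by omega) (by omega) heq
      exact Prod.ext e1 e2
    · rintro ⟨l, hs, hlen, hsum⟩
      obtain ⟨α, β, g1, g2, g3, g4, g5⟩ := mk2_surj t l (List.isChain_iff_pairwise.2 hs) hlen
      refine ⟨⟨(α, β), g1, g2, g3, g4, ?_⟩, Subtype.ext g5⟩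
      dsimp only
      rw [← hsum, ← g5, mk2_schmidt α β (by omega), g4]
  have hPad : Nat.card {l : List ℕ // IsStrict l ∧
      (l.length = 2 * t ∨ l.length = 2 * t - 1) ∧ schmidtSum 2 l = n}
      = Nat.card {l : List ℕ // l.Pairwise (· > ·) ∧ l.length = 2 * t ∧ schmidtSum 2 l = n} := by
    apply Nat.card_eq_of_bijective (fun p =>
      ⟨if p.val.length = 2 * t then p.val else p.val ++ [0], by
        obtain ⟨l, ⟨hs, hpos⟩, hlen, hsum⟩ := p
        by_cases h : l.length = 2 * t
        · rw [if_pos h]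
          exact ⟨hs, h, hsum⟩
        · rw [if_neg h]
          have hl' : l.length = 2 * t - 1 := by rcases hlen with h' | h' <;> omega
          refine ⟨?_, by simp [hl']; omega, by rw [schmidt_append_zero]; exact hsum⟩
          apply List.pairwise_append.2
          exact ⟨hs, by simp, fun a ha b hb => by
            simp at hb
            subst hb
            exact hpos a ha⟩⟩)
    constructor
    · rintro ⟨l, ⟨hs, hpos⟩, hlen, hsum⟩ ⟨l', ⟨hs', hpos'⟩, hlen', hsum'⟩ heq
      simp only [Subtype.mk.injEq] at heq ⊢
      by_cases h : l.length = 2 * t <;> by_cases h' : l'.length = 2 * t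
      · rwa [if_pos h, if_pos h'] at heq
      · rw [if_pos h, if_neg h'] at heq
        exfalso
        have : (0:ℕ) ∈ l := by rw [heq]; simp
        exact absurd (hpos 0 this) (by omega)
      · rw [if_neg h, if_pos h'] at heq
        exfalso
        have : (0:ℕ) ∈ l' := by rw [← heq]; simp
        exact absurd (hpos' 0 this) (by omega)
      · rw [if_neg h, if_neg h'] at heq
        exact List.append_cancel_right heq
    · rintro ⟨l, hs, hlen, hsum⟩
      have hne : l ≠ [] := by
        intro h
        rw [h] at hlen
        simp at hlen
        omega
      by_cases h0 : (0:ℕ) ∈ l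
      · have hlast : l.getLast hne = 0 := by
          have hdc := List.dropLast_append_getLast hne
          have h0' : (0:ℕ) ∈ l.dropLast ++ [l.getLast hne] := by rw [hdc]; exact h0
          have hpair := List.pairwise_append.1
            (show List.Pairwise (· > ·) (l.dropLast ++ [l.getLast hne]) by rw [hdc]; exact hs)
          rcases List.mem_append.1 h0' with h | h
          · have := hpair.2.2 0 h (l.getLast hne) (by simp)
            omega
          · simp at h
            omega
        have hdc := List.dropLast_append_getLast hne
        rw [hlast] at hdc
        have hdl : l.dropLast.length = 2 * t - 1 := by
          have : l.dropLast.length = l.length - 1 := by simp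
          omega
        have hdls : l.dropLast.Pairwise (· > ·) := hs.sublist (List.dropLast_sublist l)
        refine ⟨⟨l.dropLast, ⟨hdls, ?_⟩, Or.inr hdl, ?_⟩, ?_⟩
        · intro x hx
          have hpair := List.pairwise_append.1
            (show List.Pairwise (· > ·) (l.dropLast ++ [0]) by rw [hdc]; exact hs)
          have := hpair.2.2 x hx 0 (by simp)
          omega
        · have hz := schmidt_append_zero 2 l.dropLast
          rw [hdc] at hz
          rw [← hz]
          exact hsum
        · apply Subtype.ext
          show (if l.dropLast.length = 2 * t then l.dropLast else l.dropLast ++ [0]) = l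
          rw [if_neg (by omega), hdc]
      · refine ⟨⟨l, ⟨hs, fun x hx => ?_⟩, Or.inl hlen, hsum⟩, ?_⟩
        · rcases Nat.eq_zero_or_pos x with rfl | h
          · exact absurd hx h0
          · exact h
        · apply Subtype.ext
          show (if l.length = 2 * t then l else l ++ [0]) = l
          rw [if_pos hlen]
  rw [← hA, hPad, ← hB]

/-- Partitions of `n` with Durfee square of side `t` are equinumerous with
Schmidt 2-partitions of `n` with `2t` or `2t - 1` parts. -/
theorem durfee_schmidt_two (n t : ℕ) (ht : 1 ≤ t) :
    Nat.card {l : List ℕ // IsPartition l ∧ l.sum = n ∧ HasDurfeeSide l t} =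
      Nat.card {l : List ℕ // IsStrict l ∧
        (l.length = 2 * t ∨ l.length = 2 * t - 1) ∧ schmidtSum 2 l = n} :=
  durfee_schmidt_aux n t ht
end

section
/- For positive integers n and t, the number of triples (α, β, γ) of partitions of total weight n with α 2-distinct of length t, β strict of length t, and γ an arbitrary partition of length at most t, equals the number of triples (μ, ν, ω) of strict partitions of total weight n with ℓ(μ) = ℓ(ν) = t and ℓ(ω) ∈ {t−1, t}. -/
/-- `l` is a 2-distinct partition: adjacent parts differ by at least 2, all parts positive. -/
def Is2Distinct (l : List ℕ) : Prop :=
  l.Chain' (fun a b => b + 2 ≤ a) ∧ ∀ x ∈ l, 0 < x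

namespace Staircase

/-- subtract the staircase `(t-1, t-2, …, 0)` from (the padding of) `l`. -/
def subS (t : ℕ) (l : List ℕ) : List ℕ := List.ofFn fun i : Fin t => l.getD i 0 - (t - 1 - i)

/-- add the staircase `(t-1, t-2, …, 0)` to the padding of `l`. -/
def addS (t : ℕ) (l : List ℕ) : List ℕ := List.ofFn fun i : Fin t => l.getD i 0 + (t - 1 - i)

/-- keep the positive prefix. -/
def trim (l : List ℕ) : List ℕ := l.takeWhile (fun x => 0 < x)

lemma getD_ofFn {t : ℕ} (f : Fin t → ℕ) (i : ℕ) :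
    (List.ofFn f).getD i 0 = if h : i < t then f ⟨i, h⟩ else 0 := by
  split
  · next h =>
    rw [List.getD_eq_getElem (hn := by simpa using h), List.getElem_ofFn]
  · next h =>
    exact List.getD_eq_default _ _ (by simpa using Nat.le_of_not_lt h)

lemma eq_of_getD {l₁ l₂ : List ℕ} (h₁ : ∀ x ∈ l₁, 0 < x) (h₂ : ∀ x ∈ l₂, 0 < x)
    (h : ∀ i, l₁.getD i 0 = l₂.getD i 0) : l₁ = l₂ := by
  induction l₁ generalizing l₂ with
  | nil =>
    cases l₂ with
    | nil => rfl
    | cons b l => exact absurd ((h 0).symm.trans rfl) (by simpa using (h₂ b (by simp)).ne')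
  | cons a l ih =>
    cases l₂ with
    | nil => exact absurd (h 0) (by simpa using (h₁ a (by simp)).ne')
    | cons b m =>
      have hab : a = b := by simpa using h 0
      have := ih (fun x hx => h₁ x (List.mem_cons_of_mem _ hx)) (fun x hx => h₂ x (List.mem_cons_of_mem _ hx))
        (fun i => by simpa using h (i + 1))
      rw [hab, this]

lemma getD_eq_zero {l : List ℕ} (hl : ∀ x ∈ l, x = 0) (i : ℕ) : l.getD i 0 = 0 := by
  by_cases h : i < l.length
  · rw [List.getD_eq_getElem (hn := h)]; exact hl _ (l.getElem_mem h)
  · exact List.getD_eq_default _ _ (Nat.le_of_not_lt h)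

lemma trim_getD {l : List ℕ} (hl : l.Pairwise (· ≥ ·)) (i : ℕ) :
    (trim l).getD i 0 = l.getD i 0 := by
  induction l generalizing i with
  | nil => rfl
  | cons a l ih =>
    by_cases ha : 0 < a
    · have : trim (a :: l) = a :: trim l := by simp [trim, List.takeWhile_cons, ha]
      rw [this]
      cases i with
      | zero => rfl
      | succ j => simpa using ih hl.of_cons j
    · have ha0 : a = 0 := by omega
      have hz : ∀ x ∈ a :: l, x = 0 := by
        intro x hx
        rcases List.mem_cons.mp hx with rfl | hx
        · exact ha0
        · have := List.rel_of_pairwise_cons hl hx; omega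
      have : trim (a :: l) = [] := by simp [trim, List.takeWhile_cons, ha0]
      rw [this, getD_eq_zero hz i]
      rfl

lemma trim_sum {l : List ℕ} (hl : l.Pairwise (· ≥ ·)) : (trim l).sum = l.sum := by
  induction l with
  | nil => rfl
  | cons a l ih =>
    by_cases ha : 0 < a
    · have : trim (a :: l) = a :: trim l := by simp [trim, List.takeWhile_cons, ha]
      rw [this, List.sum_cons, List.sum_cons, ih hl.of_cons]
    · have ha0 : a = 0 := by omega
      have hz : ∀ x ∈ l, x = 0 := by
        intro x hx
        have := List.rel_of_pairwise_cons hl hx; omega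
      have : trim (a :: l) = [] := by simp [trim, List.takeWhile_cons, ha0]
      rw [this, List.sum_cons, ha0, List.sum_eq_zero hz]
      rfl

lemma trim_sorted {R : ℕ → ℕ → Prop} {l : List ℕ} (hl : l.Pairwise R) : (trim l).Pairwise R :=
  hl.sublist (List.takeWhile_sublist _)

lemma trim_pos {l : List ℕ} : ∀ x ∈ trim l, 0 < x := by
  intro x hx
  have := List.mem_takeWhile_imp hx
  simpa using this

lemma trim_length_le (l : List ℕ) : (trim l).length ≤ l.length :=
  (List.takeWhile_sublist _).length_le

lemma trim_length_ge {l : List ℕ} {k : ℕ} (hk : ∀ i < k, 0 < l.getD i 0)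
    (hkl : k ≤ l.length) : k ≤ (trim l).length := by
  induction l generalizing k with
  | nil => simp at hkl; omega
  | cons a l ih =>
    cases k with
    | zero => exact Nat.zero_le _
    | succ m =>
      have ha : 0 < a := by simpa using hk 0 (Nat.succ_pos _)
      have : trim (a :: l) = a :: trim l := by simp [trim, List.takeWhile_cons, ha]
      rw [this]
      simp only [List.length_cons, Nat.succ_le_succ_iff]
      exact ih (fun i hi => by simpa using hk (i+1) (by omega)) (by simpa using hkl)

lemma sum_getD (l : List ℕ) : ∀ t, l.length ≤ t → (∑ i : Fin t, l.getD i 0) = l.sum := by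
  induction l with
  | nil => intro t _; simp
  | cons a l ih =>
    intro t ht
    cases t with
    | zero => simp at ht
    | succ u =>
      rw [Fin.sum_univ_succ]
      have h0 : (a :: l).getD ((0 : Fin (u+1)) : ℕ) 0 = a := rfl
      have : ∀ i : Fin u, (a :: l).getD (((i.succ : Fin (u+1)) : ℕ)) 0 = l.getD i 0 := by
        intro i; rfl
      rw [h0, Finset.sum_congr rfl (fun i _ => this i), ih u (by simpa using ht), List.sum_cons]

lemma chain'_getD {R : ℕ → ℕ → Prop} {l : List ℕ} (h : l.Chain' R) :
    ∀ i, i + 1 < l.length → R (l.getD i 0) (l.getD (i+1) 0) := by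
  intro i hi
  rw [List.getD_eq_getElem (hn := by omega), List.getD_eq_getElem (hn := hi)]
  exact List.isChain_iff_getElem.mp h i (by omega)

lemma chain'_ofFn {R : ℕ → ℕ → Prop} {t : ℕ} {f : Fin t → ℕ}
    (h : ∀ i : ℕ, ∀ h1 : i + 1 < t, R (f ⟨i, by omega⟩) (f ⟨i+1, h1⟩)) :
    (List.ofFn f).Chain' R := by
  show List.IsChain R _
  rw [List.isChain_iff_getElem]
  intro i hi
  rw [List.getElem_ofFn, List.getElem_ofFn]
  have hi' : i + 1 < t := by simp only [List.length_ofFn] at hi; omega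
  exact h i hi'

lemma twoDistinct_bound {l : List ℕ} (hc : l.Chain' (fun a b => b + 2 ≤ a))
    (hpos : ∀ x ∈ l, 0 < x) : ∀ i < l.length, 2 * (l.length - 1 - i) < l.getD i 0 := by
  induction l with
  | nil => intro i hi; simp at hi
  | cons a l ih =>
    intro i hi
    cases i with
    | zero =>
      cases l with
      | nil => simpa using hpos a (by simp)
      | cons b m =>
        have hab : b + 2 ≤ a := (List.isChain_cons_cons.mp hc).1
        have hb := ih (List.isChain_cons_cons.mp hc).2
          (fun x hx => hpos x (List.mem_cons_of_mem _ hx)) 0 (by simp)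
        simp only [List.getD_cons_zero] at hb ⊢
        simp only [List.length_cons] at hb ⊢
        omega
    | succ j =>
      have hj := ih hc.tail (fun x hx => hpos x (List.mem_cons_of_mem _ hx)) j
        (by simpa using hi)
      simp only [List.getD_cons_succ, List.length_cons]
      omega

lemma strict_bound {l : List ℕ} (hc : l.Chain' (· > ·))
    (hpos : ∀ x ∈ l, 0 < x) : ∀ i < l.length, l.length - 1 - i < l.getD i 0 := by
  induction l with
  | nil => intro i hi; simp at hi
  | cons a l ih =>
    intro i hi
    cases i with
    | zero =>
      cases l with
      | nil => simpa using hpos a (by simp)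
      | cons b m =>
        have hab : b < a := (List.isChain_cons_cons.mp hc).1
        have hb := ih (List.isChain_cons_cons.mp hc).2
          (fun x hx => hpos x (List.mem_cons_of_mem _ hx)) 0 (by simp)
        simp only [List.getD_cons_zero] at hb ⊢
        simp only [List.length_cons] at hb ⊢
        omega
    | succ j =>
      have hj := ih hc.tail (fun x hx => hpos x (List.mem_cons_of_mem _ hx)) j
        (by simpa using hi)
      simp only [List.getD_cons_succ, List.length_cons]
      omega

lemma sorted_gt_iff_chain' {l : List ℕ} : l.Pairwise (· > ·) ↔ l.Chain' (· > ·) :=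
  (List.isChain_iff_pairwise).symm

lemma sorted_ge_iff_chain' {l : List ℕ} : l.Pairwise (· ≥ ·) ↔ l.Chain' (· ≥ ·) :=
  (List.isChain_iff_pairwise).symm

lemma getD_subS (t : ℕ) (l : List ℕ) (i : ℕ) :
    (subS t l).getD i 0 = if i < t then l.getD i 0 - (t - 1 - i) else 0 := by
  rw [subS, getD_ofFn]
  split <;> simp_all

lemma getD_addS (t : ℕ) (l : List ℕ) (i : ℕ) :
    (addS t l).getD i 0 = if i < t then l.getD i 0 + (t - 1 - i) else 0 := by
  rw [addS, getD_ofFn]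
  split <;> simp_all

lemma length_subS (t : ℕ) (l : List ℕ) : (subS t l).length = t := List.length_ofFn
lemma length_addS (t : ℕ) (l : List ℕ) : (addS t l).length = t := List.length_ofFn

/-- Forward map on the first component. -/
lemma Afwd {t : ℕ} {α : List ℕ} (h2 : α.Chain' (fun a b => b + 2 ≤ a))
    (hpos : ∀ x ∈ α, 0 < x) (hlen : α.length = t) :
    (subS t α).Pairwise (· > ·) ∧ (∀ x ∈ subS t α, 0 < x) ∧ (subS t α).length = t ∧
      (subS t α).sum + (∑ i : Fin t, (t - 1 - (i : ℕ))) = α.sum ∧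
      addS t (subS t α) = α := by
  have hb : ∀ i < t, 2 * (t - 1 - i) < α.getD i 0 := by
    intro i hi
    have := twoDistinct_bound h2 hpos i (by omega : i < α.length)
    rw [hlen] at this; exact this
  have hadj : ∀ i, i + 1 < t → α.getD (i+1) 0 + 2 ≤ α.getD i 0 := by
    intro i hi
    exact chain'_getD h2 i (by omega)
  have hsubpos : ∀ i < t, 0 < (subS t α).getD i 0 := by
    intro i hi
    rw [getD_subS]
    have := hb i hi
    simp only [if_pos hi]
    omega
  refine ⟨?_, ?_, length_subS t α, ?_, ?_⟩
  · rw [sorted_gt_iff_chain', subS]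
    apply chain'_ofFn
    intro i h1
    have := hadj i h1
    have := hb (i+1) h1
    simp only
    omega
  · intro x hx
    rw [subS, List.mem_ofFn] at hx
    obtain ⟨i, rfl⟩ := hx
    have := hb i i.isLt
    omega
  · rw [subS, List.sum_ofFn, ← sum_getD α t (le_of_eq hlen), ← Finset.sum_add_distrib]
    apply Finset.sum_congr rfl
    intro i _
    have := hb i i.isLt
    omega
  · apply eq_of_getD
    · intro x hx
      rw [addS, List.mem_ofFn] at hx
      obtain ⟨i, rfl⟩ := hx
      have := hsubpos i i.isLt
      omega
    · exact hpos
    · intro i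
      rw [getD_addS, getD_subS]
      by_cases hi : i < t
      · have := hb i hi
        simp only [if_pos hi]
        omega
      · simp only [if_neg hi]
        exact (List.getD_eq_default _ _ (by omega)).symm

/-- Backward map on the first component. -/
lemma Aback {t : ℕ} {μ : List ℕ} (hs : μ.Pairwise (· > ·))
    (hpos : ∀ x ∈ μ, 0 < x) (hlen : μ.length = t) :
    (addS t μ).Chain' (fun a b => b + 2 ≤ a) ∧ (∀ x ∈ addS t μ, 0 < x) ∧
      (addS t μ).length = t ∧
      (addS t μ).sum = μ.sum + (∑ i : Fin t, (t - 1 - (i : ℕ))) ∧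
      subS t (addS t μ) = μ := by
  have hbb : ∀ i < t, 0 < μ.getD i 0 := by
    intro i hi
    have := strict_bound (sorted_gt_iff_chain'.mp hs) hpos i (by omega : i < μ.length)
    omega
  have hadj : ∀ i, i + 1 < t → μ.getD (i+1) 0 < μ.getD i 0 := by
    intro i hi
    exact chain'_getD (sorted_gt_iff_chain'.mp hs) i (by omega)
  refine ⟨?_, ?_, length_addS t μ, ?_, ?_⟩
  · rw [addS]
    apply chain'_ofFn
    intro i h1
    have := hadj i h1
    simp only
    omega
  · intro x hx
    rw [addS, List.mem_ofFn] at hx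
    obtain ⟨i, rfl⟩ := hx
    have := hbb i i.isLt
    omega
  · rw [addS, List.sum_ofFn, ← sum_getD μ t (le_of_eq hlen), ← Finset.sum_add_distrib]
  · apply eq_of_getD
    · intro x hx
      rw [subS, List.mem_ofFn] at hx
      obtain ⟨i, rfl⟩ := hx
      have h1 := hbb i i.isLt
      have h2 : (addS t μ).getD i 0 = μ.getD i 0 + (t - 1 - (i:ℕ)) := by
        rw [getD_addS, if_pos i.isLt]
      simp only [h2]
      omega
    · exact hpos
    · intro i
      rw [getD_subS]
      by_cases hi : i < t
      · rw [if_pos hi, getD_addS, if_pos hi]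
        omega
      · rw [if_neg hi]
        exact (List.getD_eq_default _ _ (by omega)).symm

/-- Forward map on the third component. -/
lemma Cfwd {t : ℕ} (ht : 1 ≤ t) {γ : List ℕ} (hs : γ.Pairwise (· ≥ ·))
    (hpos : ∀ x ∈ γ, 0 < x) (hlen : γ.length ≤ t) :
    (trim (addS t γ)).Pairwise (· > ·) ∧ (∀ x ∈ trim (addS t γ), 0 < x) ∧
      ((trim (addS t γ)).length = t - 1 ∨ (trim (addS t γ)).length = t) ∧
      (trim (addS t γ)).sum = γ.sum + (∑ i : Fin t, (t - 1 - (i : ℕ))) ∧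
      trim (subS t (trim (addS t γ))) = γ := by
  have hmono : ∀ i, γ.getD (i+1) 0 ≤ γ.getD i 0 := by
    intro i
    by_cases h : i + 1 < γ.length
    · exact chain'_getD (sorted_ge_iff_chain'.mp hs) i h
    · rw [List.getD_eq_default _ _ (by omega)]
      exact Nat.zero_le _
  have haddchain : (addS t γ).Chain' (· > ·) := by
    rw [addS]
    apply chain'_ofFn
    intro i h1
    show γ.getD (i+1) 0 + (t - 1 - (i+1)) < γ.getD i 0 + (t - 1 - i)
    have := hmono i
    omega
  have haddge : (addS t γ).Pairwise (· ≥ ·) :=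
    (sorted_gt_iff_chain'.mpr haddchain).imp (fun h => le_of_lt h)
  have hωg : ∀ i, (trim (addS t γ)).getD i 0 = (addS t γ).getD i 0 := trim_getD haddge
  have hγg : ∀ i, (trim (subS t (trim (addS t γ)))).getD i 0 = γ.getD i 0 := by
    have hsubγ : ∀ i, (subS t (trim (addS t γ))).getD i 0
        = if i < t then γ.getD i 0 else 0 := by
      intro i
      rw [getD_subS]
      by_cases hi : i < t
      · rw [if_pos hi, if_pos hi, hωg, getD_addS, if_pos hi]
        omega
      · rw [if_neg hi, if_neg hi]
    have hsubge : (subS t (trim (addS t γ))).Pairwise (· ≥ ·) := by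
      rw [sorted_ge_iff_chain', subS]
      apply chain'_ofFn
      intro i h1
      show (trim (addS t γ)).getD i 0 - (t - 1 - i)
        ≥ (trim (addS t γ)).getD (i+1) 0 - (t - 1 - (i+1))
      rw [hωg, hωg, getD_addS, getD_addS, if_pos (by omega : i < t), if_pos h1]
      have := hmono i
      omega
    intro i
    rw [trim_getD hsubge, hsubγ]
    by_cases hi : i < t
    · rw [if_pos hi]
    · rw [if_neg hi, List.getD_eq_default _ _ (by omega)]
  refine ⟨trim_sorted (sorted_gt_iff_chain'.mpr haddchain), trim_pos, ?_, ?_, ?_⟩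
  · have h1 : (trim (addS t γ)).length ≤ t := by
      have := trim_length_le (addS t γ)
      rw [length_addS] at this
      exact this
    have h2 : t - 1 ≤ (trim (addS t γ)).length := by
      apply trim_length_ge
      · intro i hi
        rw [getD_addS, if_pos (by omega : i < t)]
        omega
      · rw [length_addS]; omega
    omega
  · rw [trim_sum haddge, addS, List.sum_ofFn, ← sum_getD γ t hlen, Finset.sum_add_distrib]
  · apply eq_of_getD trim_pos hpos hγg

/-- Backward map on the third component. -/
lemma Cback {t : ℕ} (ht : 1 ≤ t) {ω : List ℕ} (hs : ω.Pairwise (· > ·))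
    (hpos : ∀ x ∈ ω, 0 < x) (hlen : ω.length = t - 1 ∨ ω.length = t) :
    (trim (subS t ω)).Pairwise (· ≥ ·) ∧ (∀ x ∈ trim (subS t ω), 0 < x) ∧
      (trim (subS t ω)).length ≤ t ∧
      (trim (subS t ω)).sum + (∑ i : Fin t, (t - 1 - (i : ℕ))) = ω.sum ∧
      trim (addS t (trim (subS t ω))) = ω := by
  have hkey : ∀ i < t, t - 1 - i ≤ ω.getD i 0 := by
    intro i hi
    by_cases h : i < ω.length
    · have := strict_bound (sorted_gt_iff_chain'.mp hs) hpos i h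
      omega
    · rw [List.getD_eq_default _ _ (by omega)]
      omega
  have hmono : ∀ i, ω.getD (i+1) 0 ≤ ω.getD i 0 := by
    intro i
    by_cases h : i + 1 < ω.length
    · exact le_of_lt (chain'_getD (sorted_gt_iff_chain'.mp hs) i h)
    · rw [List.getD_eq_default _ _ (by omega)]
      exact Nat.zero_le _
  have hadj : ∀ i, i + 1 < ω.length → ω.getD (i+1) 0 < ω.getD i 0 := by
    intro i h
    exact chain'_getD (sorted_gt_iff_chain'.mp hs) i h
  have hsubge : (subS t ω).Pairwise (· ≥ ·) := by
    rw [sorted_ge_iff_chain', subS]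
    apply chain'_ofFn
    intro i h1
    show ω.getD i 0 - (t - 1 - i) ≥ ω.getD (i+1) 0 - (t - 1 - (i+1))
    by_cases h : i + 1 < ω.length
    · have := hadj i h
      omega
    · have : ω.getD (i+1) 0 = 0 := List.getD_eq_default _ _ (by omega)
      rw [this]
      omega
  have hγg : ∀ i, (trim (subS t ω)).getD i 0
      = if i < t then ω.getD i 0 - (t - 1 - i) else 0 := by
    intro i
    rw [trim_getD hsubge, getD_subS]
  have haddch : (addS t (trim (subS t ω))).Chain' (· ≥ ·) := by
    rw [addS]
    apply chain'_ofFn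
    intro i h1
    show (trim (subS t ω)).getD i 0 + (t - 1 - i)
      ≥ (trim (subS t ω)).getD (i+1) 0 + (t - 1 - (i+1))
    rw [hγg, hγg, if_pos (by omega : i < t), if_pos h1]
    have h4 := hmono i
    have h5 := hkey i (by omega)
    have h6 := hkey (i+1) h1
    omega
  refine ⟨trim_sorted hsubge, trim_pos, ?_, ?_, ?_⟩
  · have := trim_length_le (subS t ω)
    rw [length_subS] at this
    exact this
  · rw [trim_sum hsubge, subS, List.sum_ofFn, ← sum_getD ω t (by omega),
      ← Finset.sum_add_distrib]
    apply Finset.sum_congr rfl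
    intro i _
    have := hkey i i.isLt
    omega
  · apply eq_of_getD trim_pos hpos
    intro i
    rw [trim_getD (sorted_ge_iff_chain'.mpr haddch), getD_addS]
    by_cases hi : i < t
    · rw [if_pos hi, hγg, if_pos hi]
      have := hkey i hi
      omega
    · rw [if_neg hi, List.getD_eq_default _ _ (by omega)]

end Staircase

/-- Triples `(α, β, γ)` with `α` 2-distinct of length `t`, `β` strict of length `t`,
`γ` arbitrary of length at most `t`, and total weight `n`, are equinumerous with triples
`(μ, ν, ω)` of strict partitions of total weight `n` with `ℓ(μ) = ℓ(ν) = t` and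
`ℓ(ω) ∈ {t-1, t}`. -/
theorem staircase_triple (n t : ℕ) (hn : 1 ≤ n) (ht : 1 ≤ t) :
    Nat.card {p : List ℕ × List ℕ × List ℕ //
        Is2Distinct p.1 ∧ p.1.length = t ∧
        IsStrict p.2.1 ∧ p.2.1.length = t ∧
        IsPartition p.2.2 ∧ p.2.2.length ≤ t ∧
        p.1.sum + p.2.1.sum + p.2.2.sum = n} =
      Nat.card {p : List ℕ × List ℕ × List ℕ //
        IsStrict p.1 ∧ p.1.length = t ∧
        IsStrict p.2.1 ∧ p.2.1.length = t ∧
        IsStrict p.2.2 ∧ (p.2.2.length = t - 1 ∨ p.2.2.length = t) ∧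
        p.1.sum + p.2.1.sum + p.2.2.sum = n} := by
  apply Nat.card_congr
  exact
    { toFun := fun p =>
        ⟨(Staircase.subS t p.1.1, p.1.2.1, Staircase.trim (Staircase.addS t p.1.2.2)), by
          obtain ⟨⟨α, β, γ⟩, ⟨h2, hpos⟩, hlα, hβ, hlβ, ⟨hγs, hγp⟩, hlγ, hsum⟩ := p
          obtain ⟨s1, s2, s3, s4, s5⟩ := Staircase.Afwd h2 hpos hlα
          obtain ⟨c1, c2, c3, c4, c5⟩ := Staircase.Cfwd ht hγs hγp hlγ
          refine ⟨⟨s1, s2⟩, s3, hβ, hlβ, ⟨c1, c2⟩, c3, ?_⟩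
          show (Staircase.subS t α).sum + β.sum + (Staircase.trim (Staircase.addS t γ)).sum = n
          dsimp only at s4 c4 hsum
          omega⟩
      invFun := fun p =>
        ⟨(Staircase.addS t p.1.1, p.1.2.1, Staircase.trim (Staircase.subS t p.1.2.2)), by
          obtain ⟨⟨μ, ν, ω⟩, ⟨hμs, hμp⟩, hlμ, hν, hlν, ⟨hωs, hωp⟩, hlω, hsum⟩ := p
          obtain ⟨s1, s2, s3, s4, s5⟩ := Staircase.Aback hμs hμp hlμ
          obtain ⟨c1, c2, c3, c4, c5⟩ := Staircase.Cback ht hωs hωp hlω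
          refine ⟨⟨s1, s2⟩, s3, hν, hlν, ⟨c1, c2⟩, c3, ?_⟩
          show (Staircase.addS t μ).sum + ν.sum + (Staircase.trim (Staircase.subS t ω)).sum = n
          dsimp only at s4 c4 hsum
          omega⟩
      left_inv := by
        rintro ⟨⟨α, β, γ⟩, ⟨h2, hpos⟩, hlα, hβ, hlβ, ⟨hγs, hγp⟩, hlγ, hsum⟩
        apply Subtype.ext
        have e1 := (Staircase.Afwd h2 hpos hlα).2.2.2.2
        have e2 := (Staircase.Cfwd ht hγs hγp hlγ).2.2.2.2
        show (Staircase.addS t (Staircase.subS t α), β,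
          Staircase.trim (Staircase.subS t (Staircase.trim (Staircase.addS t γ)))) = (α, β, γ)
        rw [e1, e2]
      right_inv := by
        rintro ⟨⟨μ, ν, ω⟩, ⟨hμs, hμp⟩, hlμ, hν, hlν, ⟨hωs, hωp⟩, hlω, hsum⟩
        apply Subtype.ext
        have e1 := (Staircase.Aback hμs hμp hlμ).2.2.2.2
        have e2 := (Staircase.Cback ht hωs hωp hlω).2.2.2.2
        show (Staircase.subS t (Staircase.addS t μ), ν,
          Staircase.trim (Staircase.addS t (Staircase.trim (Staircase.subS t ω)))) = (μ, ν, ω)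
        rw [e1, e2] }
end
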